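/- arXiv:1807.08082 — 11 statements merged into one kernel-verified Lean document; each statement's English description precedes it below -/
import Mathlib

section
/- Let (G,c) be a circularly-ordered group. Define f_c : G² → ℤ by f_c(a,b) = 0 if a = id or b = id or c(id, a, ab) = 1, and f_c(a,b) = 1 if (ab = id and a ≠ id) or c(id, ab, a) = 1. Then f_c is a normalized 2-cocycle: f_c(id,g) = f_c(g,id) = 0 for all g, and f_c(g₂,g₃) − f_c(g₁g₂,g₃) + f_c(g₁,g₂g₃) − f_c(g₁,g₂) = 0 for all g₁,g₂,g₃ ∈ G. -/
open scoped Classical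

noncomputable section

/-- A (left-invariant) circular ordering on a group `G`, as an orientation cocycle. -/
def IsCircularOrdering {G : Type*} [Group G] (c : G → G → G → ℤ) : Prop :=
  (∀ a b d : G, c a b d = 0 ↔ a = b ∨ b = d ∨ a = d) ∧
  (∀ a b d : G, c a b d = 1 ∨ c a b d = 0 ∨ c a b d = -1) ∧
  (∀ a₁ a₂ a₃ a₄ : G, c a₂ a₃ a₄ - c a₁ a₃ a₄ + c a₁ a₂ a₄ - c a₁ a₂ a₃ = 0) ∧
  (∀ g a₁ a₂ a₃ : G, c (g * a₁) (g * a₂) (g * a₃) = c a₁ a₂ a₃)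

/-- The normalized 2-cocycle `f_c` associated to a circular ordering `c`:
`f_c a b = 0` if `a = 1` or `b = 1` or `c 1 a (a*b) = 1`, and `1` otherwise
(i.e. when `a*b = 1` with `a ≠ 1`, or `c 1 (a*b) a = 1`). -/
def fc {G : Type*} [Group G] (c : G → G → G → ℤ) (a b : G) : ℤ :=
  if a = 1 ∨ b = 1 ∨ c 1 a (a * b) = 1 then 0 else 1

/-- The function `f_c` associated to a circular ordering is a normalized 2-cocycle. -/
theorem stmt1 {G : Type*} [Group G] (c : G → G → G → ℤ) (hc : IsCircularOrdering c)
    (f : G → G → ℤ)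
    (hf0 : ∀ a b : G, (a = 1 ∨ b = 1 ∨ c 1 a (a * b) = 1) → f a b = 0)
    (hf1 : ∀ a b : G, ((a * b = 1 ∧ a ≠ 1) ∨ c 1 (a * b) a = 1) → f a b = 1) :
    (∀ g : G, f 1 g = 0 ∧ f g 1 = 0) ∧
      ∀ g₁ g₂ g₃ : G, f g₂ g₃ - f (g₁ * g₂) g₃ + f g₁ (g₂ * g₃) - f g₁ g₂ = 0 := by
  obtain ⟨hz, hval, hcoc, hinv⟩ := hc
  -- cyclic invariance
  have hcyc : ∀ a b d : G, c a b d = c d a b := by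
    intro a b d
    have h := hcoc d a b d
    have h1 : c d b d = 0 := (hz d b d).2 (Or.inr (Or.inr rfl))
    have h2 : c d a d = 0 := (hz d a d).2 (Or.inr (Or.inr rfl))
    linarith
  -- antisymmetry
  have hanti : ∀ a b d : G, c a d b = - c a b d := by
    intro a b d
    have h := hcoc a b d b
    have h1 : c b d b = 0 := (hz b d b).2 (Or.inr (Or.inr rfl))
    have h2 : c a b b = 0 := (hz a b b).2 (Or.inr (Or.inl rfl))
    linarith
  have hf10 : ∀ b : G, f 1 b = 0 := fun b => hf0 1 b (Or.inl rfl)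
  have hf01 : ∀ a : G, f a 1 = 0 := fun a => hf0 a 1 (Or.inr (Or.inl rfl))
  -- generic value of f
  have hfval : ∀ a b : G, a ≠ 1 → b ≠ 1 → a * b ≠ 1 → 2 * f a b = 1 - c 1 a (a * b) := by
    intro a b ha hb hab
    have hne0 : c 1 a (a * b) ≠ 0 := by
      intro h
      rcases (hz 1 a (a * b)).1 h with h' | h' | h'
      · exact ha h'.symm
      · exact hb (left_eq_mul.mp h')
      · exact hab h'.symm
    rcases hval 1 a (a * b) with h | h | h
    · rw [hf0 a b (Or.inr (Or.inr h)), h]; ring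
    · exact absurd h hne0
    · have h' : c 1 (a * b) a = 1 := by
        have := hanti 1 a (a * b); linarith
      rw [hf1 a b (Or.inr h'), h]; ring
  refine ⟨fun g => ⟨hf10 g, hf01 g⟩, ?_⟩
  intro g₁ g₂ g₃
  by_cases h1 : g₁ = 1
  · subst h1; rw [one_mul, hf10, hf10]; ring
  by_cases h2 : g₂ = 1
  · subst h2; rw [mul_one, one_mul, hf10, hf01]; ring
  by_cases h3 : g₃ = 1
  · subst h3; rw [mul_one, hf01, hf01]; ring
  by_cases h12 : g₁ * g₂ = 1
  · have e4 : f g₁ g₂ = 1 := hf1 g₁ g₂ (Or.inl ⟨h12, h1⟩)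
    by_cases h23 : g₂ * g₃ = 1
    · rw [h12, h23, hf10, hf01, hf1 g₂ g₃ (Or.inl ⟨h23, h2⟩), e4]; ring
    · have e1 := hfval g₂ g₃ h2 h3 h23
      have key : g₁ * (g₂ * g₃) = g₃ := by rw [← mul_assoc, h12, one_mul]
      have e3 := hfval g₁ (g₂ * g₃) h1 h23 (by rw [key]; exact h3)
      rw [key] at e3
      have e2 : f (g₁ * g₂) g₃ = 0 := by rw [h12]; exact hf10 g₃
      have hrel : c g₁ 1 g₃ = c 1 g₂ (g₂ * g₃) := by
        have h := hinv g₁ 1 g₂ (g₂ * g₃)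
        rwa [mul_one, h12, key] at h
      have hc1 := hcyc g₁ 1 g₃
      have hc2 := hcyc g₃ g₁ 1
      have ha' := hanti 1 g₃ g₁
      rw [e2, e4]
      linarith
  by_cases h23 : g₂ * g₃ = 1
  · have e1 : f g₂ g₃ = 1 := hf1 g₂ g₃ (Or.inl ⟨h23, h2⟩)
    have key : g₁ * g₂ * g₃ = g₁ := by rw [mul_assoc, h23, mul_one]
    have e2 := hfval (g₁ * g₂) g₃ h12 h3 (by rw [key]; exact h1)
    rw [key] at e2
    have e3 : f g₁ (g₂ * g₃) = 0 := by rw [h23]; exact hf01 g₁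
    have e4 := hfval g₁ g₂ h1 h2 h12
    have hrel : c 1 (g₁ * g₂) g₁ = - c 1 g₁ (g₁ * g₂) := hanti 1 g₁ (g₁ * g₂)
    rw [e1, e3]
    linarith
  by_cases h123 : g₁ * (g₂ * g₃) = 1
  · have e1 := hfval g₂ g₃ h2 h3 h23
    have e2 : f (g₁ * g₂) g₃ = 1 :=
      hf1 (g₁ * g₂) g₃ (Or.inl ⟨by rw [mul_assoc]; exact h123, h12⟩)
    have e3 : f g₁ (g₂ * g₃) = 1 := hf1 g₁ (g₂ * g₃) (Or.inl ⟨h123, h1⟩)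
    have e4 := hfval g₁ g₂ h1 h2 h12
    have hrel : c g₁ (g₁ * g₂) 1 = c 1 g₂ (g₂ * g₃) := by
      have h := hinv g₁ 1 g₂ (g₂ * g₃)
      rwa [mul_one, h123] at h
    have hrel2 : c g₁ (g₁ * g₂) 1 = c 1 g₁ (g₁ * g₂) := hcyc g₁ (g₁ * g₂) 1
    rw [e2, e3]
    linarith
  · have e1 := hfval g₂ g₃ h2 h3 h23
    have e2 := hfval (g₁ * g₂) g₃ h12 h3 (by rw [mul_assoc]; exact h123)
    rw [mul_assoc] at e2
    have e3 := hfval g₁ (g₂ * g₃) h1 h23 h123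
    have e4 := hfval g₁ g₂ h1 h2 h12
    have hrel : c g₁ (g₁ * g₂) (g₁ * (g₂ * g₃)) = c 1 g₂ (g₂ * g₃) := by
      have h := hinv g₁ 1 g₂ (g₂ * g₃)
      rwa [mul_one] at h
    have hco := hcoc 1 g₁ (g₁ * g₂) (g₁ * (g₂ * g₃))
    linarith
end
end

section
/- Let (G,c) be a circularly-ordered group and let G̃ be the group with underlying set ℤ × G and multiplication (n,a)(m,b) = (n + m + f_c(a,b), ab), where f_c is the cocycle associated to c. Then G̃ is a group, the element z = (1, id) is central in G̃, and the set P = {(n,a) : n ≥ 0} \ {(0,id)} is the positive cone of a left ordering of G̃ in which z is positive and cofinal. -/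
open scoped Classical

noncomputable section

/-- Multiplication of the lift `G̃ = ℤ × G`: `(n,a)(m,b) = (n+m+f_c(a,b), ab)`. -/
def mulT {G : Type*} [Group G] (c : G → G → G → ℤ) (p q : ℤ × G) : ℤ × G :=
  (p.1 + q.1 + fc c p.2 q.2, p.2 * q.2)

/-- Inversion in the lift: `(n,a)⁻¹ = (-n - f_c(a,a⁻¹), a⁻¹)`. -/
def invT {G : Type*} [Group G] (c : G → G → G → ℤ) (p : ℤ × G) : ℤ × G :=
  (-p.1 - fc c p.2 p.2⁻¹, p.2⁻¹)

/-- The positive cone `{(n,a) : n ≥ 0} \ {(0,1)}` of the lift. -/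
def posT (G : Type*) [Group G] : Set (ℤ × G) := {p | 0 ≤ p.1 ∧ p ≠ (0, 1)}

/-- The left ordering `<_c` of the lift: `p < q` iff `p⁻¹ q` lies in the positive cone. -/
def ltT {G : Type*} [Group G] (c : G → G → G → ℤ) (p q : ℤ × G) : Prop :=
  mulT c (invT c p) q ∈ posT G

theorem fc_cocycle {G : Type*} [Group G] (c : G → G → G → ℤ) (hc : IsCircularOrdering c)
    (a b d : G) : fc c a b + fc c (a * b) d = fc c a (b * d) + fc c b d := by
  obtain ⟨hzero, hval, hcoc, hinv⟩ := hc
  by_cases ha : a = 1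
  · subst ha; simp [fc]
  by_cases hb : b = 1
  · subst hb; simp [fc]
  by_cases hd : d = 1
  · subst hd; simp [fc]
  have hDE : c 1 b (b * d) = c a (a * b) (a * b * d) := by
    have := hinv a 1 b (b * d); rw [mul_one, ← mul_assoc] at this; exact this.symm
  have hco := hcoc 1 a (a * b) (a * b * d)
  rw [← hDE] at hco
  have hA := hval 1 a (a * b)
  have hB := hval 1 (a * b) (a * b * d)
  have hC := hval 1 a (a * b * d)
  have hE := hval 1 b (b * d)
  have hA0 : c 1 a (a * b) = 0 ↔ a * b = 1 := by
    rw [hzero]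
    constructor
    · rintro (h | h | h)
      · exact absurd h.symm ha
      · exact absurd (left_eq_mul.mp h) hb
      · exact h.symm
    · intro h; exact Or.inr (Or.inr h.symm)
  have hB0 : c 1 (a * b) (a * b * d) = 0 ↔ (a * b = 1 ∨ a * b * d = 1) := by
    rw [hzero]
    constructor
    · rintro (h | h | h)
      · exact Or.inl h.symm
      · exact absurd (left_eq_mul.mp h) hd
      · exact Or.inr h.symm
    · rintro (h | h)
      · exact Or.inl h.symm
      · exact Or.inr (Or.inr h.symm)
  have hC0 : c 1 a (a * b * d) = 0 ↔ (b * d = 1 ∨ a * b * d = 1) := by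
    rw [hzero]
    constructor
    · rintro (h | h | h)
      · exact absurd h.symm ha
      · rw [mul_assoc] at h
        exact Or.inl (left_eq_mul.mp h)
      · exact Or.inr h.symm
    · rintro (h | h)
      · exact Or.inr (Or.inl (by rw [mul_assoc, h, mul_one]))
      · exact Or.inr (Or.inr h.symm)
  have hE0 : c 1 b (b * d) = 0 ↔ b * d = 1 := by
    rw [hzero]
    constructor
    · rintro (h | h | h)
      · exact absurd h.symm hb
      · exact absurd (left_eq_mul.mp h) hd
      · exact h.symm
    · intro h; exact Or.inr (Or.inr h.symm)
  simp only [fc, ← mul_assoc, ha, hb, hd, false_or]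
  set A := c 1 a (a * b)
  set B := c 1 (a * b) (a * b * d)
  set C := c 1 a (a * b * d)
  set E := c 1 b (b * d)
  by_cases hab : a * b = 1
  · by_cases habd : a * b * d = 1
    · exact absurd (by rwa [hab, one_mul] at habd) hd
    by_cases hbd : b * d = 1
    · -- A=0, B=0, C=0, E=0
      have h1 : A = 0 := hA0.mpr hab
      have h2 : B = 0 := hB0.mpr (Or.inl hab)
      have h3 : C = 0 := hC0.mpr (Or.inl hbd)
      have h4 : E = 0 := hE0.mpr hbd
      simp only [hab, hbd, eq_self_iff_true, true_or, if_true]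
      split_ifs <;> omega
    · have h1 : A = 0 := hA0.mpr hab
      have h2 : B = 0 := hB0.mpr (Or.inl hab)
      have h3 : C ≠ 0 := fun h => (hC0.mp h).elim hbd habd
      have h4 : E ≠ 0 := fun h => hbd (hE0.mp h)
      simp only [hab, hbd, eq_self_iff_true, true_or, if_true, false_or]
      split_ifs <;> omega
  · by_cases hbd : b * d = 1
    · by_cases habd : a * b * d = 1
      · exact absurd (by rw [mul_assoc, hbd, mul_one] at habd; exact habd) ha
      have h1 : A ≠ 0 := fun h => hab (hA0.mp h)
      have h2 : B ≠ 0 := fun h => (hB0.mp h).elim hab habd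
      have h3 : C = 0 := hC0.mpr (Or.inl hbd)
      have h4 : E = 0 := hE0.mpr hbd
      simp only [hab, hbd, eq_self_iff_true, true_or, if_true, false_or]
      split_ifs <;> omega
    · by_cases habd : a * b * d = 1
      · have h1 : A ≠ 0 := fun h => hab (hA0.mp h)
        have h2 : B = 0 := hB0.mpr (Or.inr habd)
        have h3 : C = 0 := hC0.mpr (Or.inr habd)
        have h4 : E ≠ 0 := fun h => hbd (hE0.mp h)
        simp only [hab, hbd, false_or]
        split_ifs <;> omega
      · have h1 : A ≠ 0 := fun h => hab (hA0.mp h)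
        have h2 : B ≠ 0 := fun h => (hB0.mp h).elim hab habd
        have h3 : C ≠ 0 := fun h => (hC0.mp h).elim hbd habd
        have h4 : E ≠ 0 := fun h => hbd (hE0.mp h)
        simp only [hab, hbd, false_or]
        split_ifs <;> omega

theorem fc_one_left {G : Type*} [Group G] (c : G → G → G → ℤ) (b : G) : fc c 1 b = 0 := by
  simp [fc]

theorem fc_one_right {G : Type*} [Group G] (c : G → G → G → ℤ) (a : G) : fc c a 1 = 0 := by
  simp [fc]

theorem fc_mem {G : Type*} [Group G] (c : G → G → G → ℤ) (a b : G) :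
    fc c a b = 0 ∨ fc c a b = 1 := by
  unfold fc; split_ifs <;> simp

theorem fc_inv_right {G : Type*} [Group G] (c : G → G → G → ℤ) (hc : IsCircularOrdering c)
    (a : G) (ha : a ≠ 1) : fc c a a⁻¹ = 1 := by
  have h0 : c 1 a (a * a⁻¹) = 0 := by
    rw [mul_inv_cancel]; exact (hc.1 _ _ _).2 (Or.inr (Or.inr rfl))
  rw [fc, if_neg]
  rintro (h | h | h)
  · exact ha h
  · exact ha (inv_eq_one.mp h)
  · rw [h0] at h; exact one_ne_zero h.symm

theorem fc_inv_left {G : Type*} [Group G] (c : G → G → G → ℤ) (hc : IsCircularOrdering c)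
    (a : G) (ha : a ≠ 1) : fc c a⁻¹ a = 1 := by
  have h0 : c 1 a⁻¹ (a⁻¹ * a) = 0 := by
    rw [inv_mul_cancel]; exact (hc.1 _ _ _).2 (Or.inr (Or.inr rfl))
  rw [fc, if_neg]
  rintro (h | h | h)
  · exact ha (inv_eq_one.mp h)
  · exact ha h
  · rw [h0] at h; exact one_ne_zero h.symm


/-- The lift construction: `ℤ × G` with the twisted multiplication is a group,
`z = (1,1)` is central, and `posT` is the positive cone of a left ordering in which
`z` is positive and cofinal. -/
theorem stmt2 {G : Type*} [Group G] (c : G → G → G → ℤ) (hc : IsCircularOrdering c) :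
    (∀ p q r : ℤ × G, mulT c (mulT c p q) r = mulT c p (mulT c q r)) ∧
    (∀ p : ℤ × G, mulT c ((0 : ℤ), (1 : G)) p = p ∧ mulT c p ((0 : ℤ), (1 : G)) = p) ∧
    (∀ p : ℤ × G, mulT c (invT c p) p = ((0 : ℤ), (1 : G)) ∧
      mulT c p (invT c p) = ((0 : ℤ), (1 : G))) ∧
    (∀ p : ℤ × G, mulT c ((1 : ℤ), (1 : G)) p = mulT c p ((1 : ℤ), (1 : G))) ∧
    (∀ p ∈ posT G, ∀ q ∈ posT G, mulT c p q ∈ posT G) ∧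
    (∀ p : ℤ × G, p ≠ ((0 : ℤ), (1 : G)) → (p ∈ posT G ↔ invT c p ∉ posT G)) ∧
    (((1 : ℤ), (1 : G)) ∈ posT G) ∧
    (∀ p : ℤ × G, ∃ k : ℤ, ltT c ((-k : ℤ), (1 : G)) p ∧ ltT c p ((k : ℤ), (1 : G))) := by
  refine ⟨?_, ?_, ?_, ?_, ?_, ?_, ?_, ?_⟩
  · -- associativity
    rintro ⟨n, a⟩ ⟨m, b⟩ ⟨k, d⟩
    have h := fc_cocycle c hc a b d
    simp only [mulT, Prod.mk.injEq, mul_assoc]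
    exact ⟨by omega, trivial⟩
  · rintro ⟨n, a⟩
    simp [mulT, fc_one_left, fc_one_right]
  · rintro ⟨n, a⟩
    by_cases ha : a = 1
    · subst ha
      simp [mulT, invT, fc_one_left, fc_one_right]
    · have h1 := fc_inv_right c hc a ha
      have h2 := fc_inv_left c hc a ha
      simp only [mulT, invT, h1, h2, inv_mul_cancel, mul_inv_cancel, Prod.mk.injEq]
      refine ⟨⟨by omega, ?_⟩, by omega, ?_⟩ <;> trivial
  · rintro ⟨n, a⟩
    simp [mulT, fc_one_left, fc_one_right, add_comm]
  · rintro ⟨n, a⟩ ⟨hn, hp⟩ ⟨m, b⟩ ⟨hm, hq⟩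
    simp only [posT, Set.mem_setOf_eq, mulT] at *
    rcases fc_mem c a b with h | h
    · constructor
      · omega
      · intro hcon
        rw [Prod.mk.injEq] at hcon
        obtain ⟨h1, h2⟩ := hcon
        -- n + m + 0 = 0 so n = m = 0; a*b = 1 with fc a b = 0 forces a=1 or b=1
        have hn0 : n = 0 := by omega
        have hm0 : m = 0 := by omega
        by_cases ha : a = 1
        · exact hp (by rw [hn0, ha])
        · have := fc_inv_right c hc a ha
          have hb : b = a⁻¹ := (inv_eq_of_mul_eq_one_right h2).symm
          rw [hb] at h
          omega
    · exact ⟨by omega, by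
        intro hcon
        rw [Prod.mk.injEq] at hcon
        omega⟩
  · rintro ⟨n, a⟩ hne
    by_cases ha : a = 1
    · subst ha
      have hn : n ≠ 0 := fun h => hne (by rw [h])
      have hinv : invT c (n, (1:G)) = (-n, (1:G)) := by
        simp [invT, fc_one_left]
      rw [hinv]
      constructor
      · rintro ⟨h0, -⟩ ⟨h1, -⟩
        omega
      · intro h
        refine ⟨?_, hne⟩
        by_contra hcon
        exact h ⟨by omega, fun hc2 => hn (by have := congrArg Prod.fst hc2; simpa using this)⟩
    · have h1 := fc_inv_right c hc a ha
      have hainv : a⁻¹ ≠ 1 := fun h => ha (inv_eq_one.mp h)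
      have hinv : invT c (n, a) = (-n - 1, a⁻¹) := by
        simp [invT, h1]
      rw [hinv]
      constructor
      · rintro ⟨h0, -⟩ ⟨h2, -⟩
        omega
      · intro h
        refine ⟨?_, fun hc2 => ha (by have := congrArg Prod.snd hc2; simpa using this)⟩
        by_contra hcon
        exact h ⟨by omega, fun hc2 => hainv (by have := congrArg Prod.snd hc2; simpa using this)⟩
  · exact ⟨by norm_num, fun h => by have : (1:ℤ) = 0 := congrArg Prod.fst h; omega⟩
  · rintro ⟨n, a⟩
    obtain e0 | e0 := fc_mem c a a⁻¹ <;>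
    · refine ⟨|n| + 2, ?_, ?_⟩
      · show mulT c (invT c (-(|n|+2), (1:G))) (n, a) ∈ posT G
        have heq : mulT c (invT c (-(|n|+2), (1:G))) (n, a) = (|n| + 2 + n, a) := by
          simp [mulT, invT, fc_one_left, fc_one_right]
        rw [heq]
        have hle := neg_abs_le n
        exact ⟨by omega, fun hcon => by
          have := congrArg Prod.fst hcon; simp at this; omega⟩
      · show mulT c (invT c (n, a)) (|n|+2, (1:G)) ∈ posT G
        have heq : mulT c (invT c (n, a)) (|n|+2, (1:G)) = (-n - fc c a a⁻¹ + (|n|+2), a⁻¹) := by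
          simp [mulT, invT, fc_one_right]
        rw [heq, e0]
        have hle := le_abs_self n
        exact ⟨by omega, fun hcon => by
          have := congrArg Prod.fst hcon; simp at this; omega⟩
end
end

section
/- Let (G,<) be a left-ordered group with a central, positive, cofinal element z. For each coset g⟨z⟩ there is a unique minimal representative ḡ ∈ g⟨z⟩ with id ≤ ḡ < z. Define c_<(g₁⟨z⟩, g₂⟨z⟩, g₃⟨z⟩) = sign(σ) where σ is the unique permutation in S₃ with ḡ_{σ(1)} < ḡ_{σ(2)} < ḡ_{σ(3)}, for distinct cosets, and 0 otherwise. Then c_< is a well-defined circular ordering on G/⟨z⟩. -/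
open scoped Classical

noncomputable section

/-!
Since `z` is central and cofinal, `[1, z)` is a fundamental domain for `⟨z⟩`: every coset meets it
exactly once, and `c_<` is the cyclic orientation of the linear order pulled back along this
section. The values and the cocycle identity hold for the cyclic orientation of any linear order
(rank the four points to reduce to `ℕ`). For left invariance we may take `g ∈ [1, z)`; then
`x ↦ g x` maps `[1, z)` into `[1, z²)`, and reducing back into `[1, z)` multiplies the points
landing in `[z, z²)` by `z⁻¹`. The resulting map is increasing on both pieces and moves the upper
piece below the lower one, i.e. it is a rotation of the circle, so it preserves cyclic orientation.
-/

section CyclicOrient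

variable {α β : Type*} [LinearOrder α] [LinearOrder β] {a b c : α}

def cyclicOrient (a b c : α) : ℤ :=
  if a = b ∨ b = c ∨ a = c then 0
  else if (a < b ∧ b < c) ∨ (b < c ∧ c < a) ∨ (c < a ∧ a < b) then 1 else -1

theorem cyclicOrient_eq_zero_iff : cyclicOrient a b c = 0 ↔ a = b ∨ b = c ∨ a = c := by
  unfold cyclicOrient
  split_ifs <;> simp_all

theorem cyclicOrient_eq_one_or_eq_zero_or_eq_neg_one (a b c : α) :
    cyclicOrient a b c = 1 ∨ cyclicOrient a b c = 0 ∨ cyclicOrient a b c = -1 := by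
  unfold cyclicOrient
  split_ifs <;> simp

theorem cyclicOrient_of_ne (hab : a ≠ b) (hbc : b ≠ c) (hac : a ≠ c) :
    cyclicOrient a b c =
      if (a < b ∧ b < c) ∨ (b < c ∧ c < a) ∨ (c < a ∧ a < b) then 1 else -1 := by
  simp [cyclicOrient, hab, hbc, hac]

theorem cyclicOrient_rotate (a b c : α) : cyclicOrient b c a = cyclicOrient a b c := by
  unfold cyclicOrient
  congr 1
  · exact propext ⟨by rintro (h | h | h) <;> simp_all [eq_comm],
      by rintro (h | h | h) <;> simp_all [eq_comm]⟩
  · congr 1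
    exact propext (by tauto)

theorem cyclicOrient_of_extreme (h : (a < c ∧ b < c) ∨ (c < a ∧ c < b)) :
    cyclicOrient a b c = if a < b then 1 else if a = b then 0 else -1 := by
  rcases lt_trichotomy a b with hab | rfl | hab
  · rcases h with ⟨hac, hbc⟩ | ⟨hca, hcb⟩
    · simp [cyclicOrient, hab, hbc, hab.ne, hbc.ne, hac.ne]
    · simp [cyclicOrient, hab, hca, hab.ne, hcb.ne', hca.ne']
  · simp [cyclicOrient]
  · rcases h with ⟨hac, hbc⟩ | ⟨hca, hcb⟩
    · simp [cyclicOrient, hab.not_gt, hab.ne', hbc.ne, hac.ne, hac.not_gt]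
    · simp [cyclicOrient, hab.not_gt, hab.ne', hcb.ne', hca.ne', hcb.not_gt]

theorem StrictMonoOn.cyclicOrient_map {f : α → β} {s : Set α} (hf : StrictMonoOn f s)
    (ha : a ∈ s) (hb : b ∈ s) (hc : c ∈ s) :
    cyclicOrient (f a) (f b) (f c) = cyclicOrient a b c := by
  simp only [cyclicOrient, hf.lt_iff_lt, hf.injOn.eq_iff, *]

theorem cyclicOrient_cocycle (a b c d : α) :
    cyclicOrient b c d - cyclicOrient a c d + cyclicOrient a b d - cyclicOrient a b c = 0 := by
  have hℕ : ∀ a b c d : ℕ,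
      cyclicOrient b c d - cyclicOrient a c d + cyclicOrient a b d - cyclicOrient a b c = 0 := by
    intro a b c d
    simp only [cyclicOrient]
    split_ifs <;> omega
  let s : Finset α := {a, b, c, d}
  let e := s.orderIsoOfFin rfl
  let rank : α → ℕ := fun x => if h : x ∈ s then (e.symm ⟨x, h⟩ : ℕ) else 0
  have hrank : StrictMonoOn rank s := by
    intro x hx y hy hxy
    simp only [rank, dif_pos (Finset.mem_coe.1 hx), dif_pos (Finset.mem_coe.1 hy)]
    exact e.symm.strictMono (show (⟨x, hx⟩ : s) < ⟨y, hy⟩ from hxy)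
  have ha : a ∈ (s : Set α) := by simp [s]
  have hb : b ∈ (s : Set α) := by simp [s]
  have hc : c ∈ (s : Set α) := by simp [s]
  have hd : d ∈ (s : Set α) := by simp [s]
  rw [← hrank.cyclicOrient_map hb hc hd, ← hrank.cyclicOrient_map ha hc hd,
    ← hrank.cyclicOrient_map ha hb hd, ← hrank.cyclicOrient_map ha hb hc]
  exact hℕ _ _ _ _

theorem StrictMonoOn.cyclicOrient_map_of_extreme {f : α → β} {s : Set α} (hf : StrictMonoOn f s)
    (ha : a ∈ s) (hb : b ∈ s) (h : (a < c ∧ b < c) ∨ (c < a ∧ c < b))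
    (hf' : (f a < f c ∧ f b < f c) ∨ (f c < f a ∧ f c < f b)) :
    cyclicOrient (f a) (f b) (f c) = cyclicOrient a b c := by
  simp only [cyclicOrient_of_extreme h, cyclicOrient_of_extreme hf', hf.lt_iff_lt ha hb,
    hf.injOn.eq_iff ha hb]

theorem cyclicOrient_map_of_rotation {f : α → β} {s t : Set α} (hs : StrictMonoOn f s)
    (ht : StrictMonoOn f t) (hst : ∀ x ∈ s, ∀ y ∈ t, x < y ∧ f y < f x)
    (ha : a ∈ s ∪ t) (hb : b ∈ s ∪ t) (hc : c ∈ s ∪ t) :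
    cyclicOrient (f a) (f b) (f c) = cyclicOrient a b c := by
  have sst : ∀ {a b c : α}, a ∈ s → b ∈ s → c ∈ t →
      cyclicOrient (f a) (f b) (f c) = cyclicOrient a b c := fun ha hb hc =>
    hs.cyclicOrient_map_of_extreme ha hb (.inl ⟨(hst _ ha _ hc).1, (hst _ hb _ hc).1⟩)
      (.inr ⟨(hst _ ha _ hc).2, (hst _ hb _ hc).2⟩)
  have tts : ∀ {a b c : α}, a ∈ t → b ∈ t → c ∈ s →
      cyclicOrient (f a) (f b) (f c) = cyclicOrient a b c := fun ha hb hc =>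
    ht.cyclicOrient_map_of_extreme ha hb (.inr ⟨(hst _ hc _ ha).1, (hst _ hc _ hb).1⟩)
      (.inl ⟨(hst _ hc _ ha).2, (hst _ hc _ hb).2⟩)
  rcases ha with ha | ha <;> rcases hb with hb | hb <;> rcases hc with hc | hc
  · exact hs.cyclicOrient_map ha hb hc
  · exact sst ha hb hc
  · rw [cyclicOrient_rotate (f c), cyclicOrient_rotate c]; exact sst hc ha hb
  · rw [← cyclicOrient_rotate (f a), ← cyclicOrient_rotate a]; exact tts hb hc ha
  · rw [← cyclicOrient_rotate (f a), ← cyclicOrient_rotate a]; exact sst hb hc ha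
  · rw [cyclicOrient_rotate (f c), cyclicOrient_rotate c]; exact tts hc ha hb
  · exact tts ha hb hc
  · exact ht.cyclicOrient_map ha hb hc

end CyclicOrient

section LeftOrderedGroup

variable {G : Type*} [Group G] [LinearOrder G] [MulLeftMono G] {z g x y : G}

variable (z) in
def IsCofinalElement : Prop :=
  ∀ g : G, ∃ k : ℤ, z ^ (-k) < g ∧ g < z ^ k

theorem monotone_zpow_of_one_le (hz1 : 1 ≤ z) : Monotone fun n : ℤ => z ^ n :=
  monotone_int_of_le_succ fun n => by
    rw [zpow_add_one]
    exact le_mul_of_one_le_right' hz1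

theorem nonpos_of_mul_zpow_lt (hz : ∀ g, Commute z g) (hz1 : 1 ≤ z) {n : ℤ} (hx : 1 ≤ x)
    (h : x * z ^ n < z) : n ≤ 0 := by
  by_contra! hn
  refine h.not_ge ?_
  calc z = z ^ (1 : ℤ) := (zpow_one z).symm
    _ ≤ z ^ n := monotone_zpow_of_one_le hz1 (by omega)
    _ ≤ z ^ n * x := le_mul_of_one_le_right' hx
    _ = x * z ^ n := ((hz x).zpow_left n).eq

theorem eq_of_mem_Ico_of_mk_eq (hz : ∀ g, Commute z g) (hx : x ∈ Set.Ico 1 z)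
    (hy : y ∈ Set.Ico 1 z) (h : (x : G ⧸ Subgroup.zpowers z) = y) : x = y := by
  obtain ⟨n, hn⟩ := Subgroup.mem_zpowers_iff.1 (QuotientGroup.eq.1 h)
  have hz1 : 1 ≤ z := hx.1.trans hx.2.le
  have hy' : y = x * z ^ n := by rw [hn, mul_inv_cancel_left]
  have hx' : x = y * z ^ (-n) := by rw [hy', zpow_neg, mul_inv_cancel_right]
  have h₁ := nonpos_of_mul_zpow_lt hz hz1 hx.1 (hy' ▸ hy.2)
  have h₂ := nonpos_of_mul_zpow_lt hz hz1 hy.1 (hx' ▸ hx.2)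
  rw [hy', show n = 0 by omega, zpow_zero, mul_one]

/-- Take the least `n` with `1 ≤ g * z ^ n`; cofinality makes this set nonempty and bounded
below. -/
theorem exists_mul_zpow_mem_Ico (hz : ∀ g, Commute z g) (hz1 : 1 < z)
    (hcof : IsCofinalElement z) (g : G) :
    ∃ n : ℤ, g * z ^ n ∈ Set.Ico 1 z := by
  obtain ⟨k, hlow, hup⟩ := hcof g
  have hbdd : ∀ n, 1 ≤ g * z ^ n → -k ≤ n := by
    intro n hn
    by_contra! hnk
    refine (hn.trans ((mul_le_mul_iff_left g).2 (monotone_zpow_of_one_le hz1.le hnk.le))).not_gt ?_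
    calc g * z ^ (-k) = z ^ (-k) * g := ((hz g).zpow_left (-k)).eq.symm
      _ < z ^ (-k) * z ^ k := (mul_lt_mul_iff_left _).2 hup
      _ = 1 := by rw [← zpow_add, neg_add_cancel, zpow_zero]
  have hk : 1 ≤ g * z ^ k := by
    calc 1 = z ^ k * z ^ (-k) := by rw [← zpow_add, add_neg_cancel, zpow_zero]
      _ ≤ z ^ k * g := (mul_le_mul_iff_left _).2 hlow.le
      _ = g * z ^ k := ((hz g).zpow_left k).eq
  obtain ⟨m, hm, hmin⟩ := Int.exists_least_of_bdd ⟨-k, hbdd⟩ ⟨k, hk⟩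
  refine ⟨m, hm, lt_of_not_ge fun hzm => ?_⟩
  have hm' : 1 ≤ g * z ^ (m - 1) := by
    rw [zpow_sub_one, ← mul_assoc, ← (hz _).inv_left.eq]
    exact le_inv_mul_iff_mul_le.2 (by rwa [mul_one])
  have := hmin _ hm'
  omega

theorem existsUnique_mem_Ico_mul_zpow (hz : ∀ g, Commute z g) (hz1 : 1 < z)
    (hcof : IsCofinalElement z) (g : G) :
    ∃! x : G, (∃ k : ℤ, x = g * z ^ k) ∧ x ∈ Set.Ico 1 z := by
  obtain ⟨n, hn⟩ := exists_mul_zpow_mem_Ico hz hz1 hcof g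
  refine ⟨g * z ^ n, ⟨⟨n, rfl⟩, hn⟩, ?_⟩
  rintro _ ⟨⟨k, rfl⟩, hk⟩
  refine eq_of_mem_Ico_of_mk_eq hz hk hn ?_
  rw [QuotientGroup.mk_mul_of_mem g (Subgroup.zpow_mem_zpowers z k),
    QuotientGroup.mk_mul_of_mem g (Subgroup.zpow_mem_zpowers z n)]

variable (z) in
/-- The minimal representative `ḡ` of `q = g⟨z⟩`; a junk value if `q` does not meet `[1, z)`. -/
def minRep (q : G ⧸ Subgroup.zpowers z) : G :=
  Classical.epsilon fun x => x ∈ Set.Ico 1 z ∧ (x : G ⧸ Subgroup.zpowers z) = q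

theorem minRep_spec (hz : ∀ g, Commute z g) (hz1 : 1 < z)
    (hcof : IsCofinalElement z) (q : G ⧸ Subgroup.zpowers z) :
    minRep z q ∈ Set.Ico 1 z ∧ ((minRep z q : G) : G ⧸ Subgroup.zpowers z) = q := by
  refine Classical.epsilon_spec
    (p := fun x => x ∈ Set.Ico 1 z ∧ (x : G ⧸ Subgroup.zpowers z) = q) ?_
  obtain ⟨g, rfl⟩ := QuotientGroup.mk_surjective q
  obtain ⟨n, hn⟩ := exists_mul_zpow_mem_Ico hz hz1 hcof g
  exact ⟨_, hn, QuotientGroup.mk_mul_of_mem g (Subgroup.zpow_mem_zpowers z n)⟩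

theorem minRep_mk (hz : ∀ g, Commute z g) (hx : x ∈ Set.Ico 1 z) : minRep z x = x :=
  have h := Classical.epsilon_spec
    (p := fun y => y ∈ Set.Ico 1 z ∧ (y : G ⧸ Subgroup.zpowers z) = x) ⟨x, hx, rfl⟩
  eq_of_mem_Ico_of_mk_eq hz h.1 hx h.2

theorem minRep_injective (hz : ∀ g, Commute z g) (hz1 : 1 < z)
    (hcof : IsCofinalElement z) : Function.Injective (minRep z) :=
  Function.LeftInverse.injective fun q => (minRep_spec hz hz1 hcof q).2

variable (z) in
/-- Left multiplication by `g` transported to the fundamental domain `[1, z)`. -/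
def icoRotate (g x : G) : G :=
  if g * x < z then g * x else z⁻¹ * g * x

theorem minRep_mk_mul (hz : ∀ g, Commute z g) (hg : g ∈ Set.Ico 1 z) (hx : x ∈ Set.Ico 1 z) :
    minRep z (g * x : G) = icoRotate z g x := by
  unfold icoRotate
  split_ifs with h
  · exact minRep_mk hz ⟨one_le_mul hg.1 hx.1, h⟩
  · have hmk : ((g * x : G) : G ⧸ Subgroup.zpowers z) = (z⁻¹ * g * x : G) := by
      rw [mul_assoc, (hz _).inv_left.eq,
        QuotientGroup.mk_mul_of_mem _ (inv_mem (Subgroup.mem_zpowers z))]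
    rw [hmk, mul_assoc]
    refine minRep_mk hz ⟨le_inv_mul_iff_mul_le.2 (by rwa [mul_one, ← not_lt]), ?_⟩
    calc z⁻¹ * (g * x) < z⁻¹ * (g * z) :=
          (mul_lt_mul_iff_left _).2 ((mul_lt_mul_iff_left g).2 hx.2)
      _ = g := by rw [← (hz g).eq, inv_mul_cancel_left]
      _ < z := hg.2

theorem cyclicOrient_icoRotate (hz : ∀ g, Commute z g) {x₁ x₂ x₃ : G}
    (hx₁ : x₁ ∈ Set.Ico 1 z) (hx₂ : x₂ ∈ Set.Ico 1 z) (hx₃ : x₃ ∈ Set.Ico 1 z) :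
    cyclicOrient (icoRotate z g x₁) (icoRotate z g x₂) (icoRotate z g x₃) =
      cyclicOrient x₁ x₂ x₃ := by
  let s := {x | x ∈ Set.Ico 1 z ∧ g * x < z}
  let t := {x | x ∈ Set.Ico 1 z ∧ z ≤ g * x}
  have hs : StrictMonoOn (icoRotate z g) s := by
    intro x hx y hy hxy
    simp only [icoRotate, if_pos hx.2, if_pos hy.2]
    exact (mul_lt_mul_iff_left g).2 hxy
  have ht : StrictMonoOn (icoRotate z g) t := by
    intro x hx y hy hxy
    simp only [icoRotate, if_neg hx.2.not_gt, if_neg hy.2.not_gt]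
    exact (mul_lt_mul_iff_left _).2 hxy
  have hst : ∀ x ∈ s, ∀ y ∈ t, x < y ∧ icoRotate z g y < icoRotate z g x := by
    intro x hx y hy
    simp only [icoRotate, if_pos hx.2, if_neg hy.2.not_gt]
    refine ⟨(mul_lt_mul_iff_left g).1 (hx.2.trans_le hy.2), ?_⟩
    calc z⁻¹ * g * y < g := by
          rw [mul_assoc, inv_mul_lt_iff_lt_mul, (hz g).eq]
          exact (mul_lt_mul_iff_left g).2 hy.1.2
      _ ≤ g * x := le_mul_of_one_le_right' hx.1.1
  have hcover : ∀ x ∈ Set.Ico 1 z, x ∈ s ∪ t := fun x hx =>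
    (lt_or_ge (g * x) z).imp (fun h => ⟨hx, h⟩) (fun h => ⟨hx, h⟩)
  exact cyclicOrient_map_of_rotation hs ht hst (hcover _ hx₁) (hcover _ hx₂) (hcover _ hx₃)

variable (z) in
/-- The circular ordering `c_<` of `G ⧸ ⟨z⟩`. -/
def quotientCyclicOrient (q₁ q₂ q₃ : G ⧸ Subgroup.zpowers z) : ℤ :=
  cyclicOrient (minRep z q₁) (minRep z q₂) (minRep z q₃)

theorem quotientCyclicOrient_mul [(Subgroup.zpowers z).Normal] (hz : ∀ g, Commute z g)
    (hz1 : 1 < z) (hcof : IsCofinalElement z)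
    (g q₁ q₂ q₃ : G ⧸ Subgroup.zpowers z) :
    quotientCyclicOrient z (g * q₁) (g * q₂) (g * q₃) = quotientCyclicOrient z q₁ q₂ q₃ := by
  have hrep := minRep_spec hz hz1 hcof
  have hmul : ∀ q, minRep z (g * q) = icoRotate z (minRep z g) (minRep z q) := fun q => by
    conv_lhs => rw [← (hrep g).2, ← (hrep q).2]
    exact minRep_mk_mul hz (hrep g).1 (hrep q).1
  simp only [quotientCyclicOrient, hmul]
  exact cyclicOrient_icoRotate hz (hrep q₁).1 (hrep q₂).1 (hrep q₃).1

theorem isCircularOrdering_quotientCyclicOrient [(Subgroup.zpowers z).Normal]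
    (hz : ∀ g, Commute z g) (hz1 : 1 < z) (hcof : IsCofinalElement z) :
    IsCircularOrdering (quotientCyclicOrient z) := by
  refine ⟨fun a b c => ?_, fun a b c => cyclicOrient_eq_one_or_eq_zero_or_eq_neg_one _ _ _,
    fun a b c d => cyclicOrient_cocycle _ _ _ _, quotientCyclicOrient_mul hz hz1 hcof⟩
  simp only [quotientCyclicOrient, cyclicOrient_eq_zero_iff,
    (minRep_injective hz hz1 hcof).eq_iff]

end LeftOrderedGroup

/-- Quotient construction: each coset of `⟨z⟩` has a unique minimal representative in `[1,z)`,
and sorting minimal representatives yields a well-defined circular ordering on `G/⟨z⟩`. -/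
theorem stmt3 {G : Type*} [Group G] (lt : G → G → Prop)
    (hsto : IsStrictTotalOrder G lt)
    (hinv : ∀ f g h : G, lt g h → lt (f * g) (f * h))
    (z : G) (hzc : ∀ g : G, z * g = g * z) (hzpos : lt 1 z)
    (hcof : ∀ g : G, ∃ k : ℤ, lt (z ^ (-k)) g ∧ lt g (z ^ k))
    [hnrm : (Subgroup.zpowers z).Normal] :
    (∀ g : G, ∃! x : G, (∃ k : ℤ, x = g * z ^ k) ∧ ¬lt x 1 ∧ lt x z) ∧
    ∃ cbar : G ⧸ Subgroup.zpowers z → G ⧸ Subgroup.zpowers z → G ⧸ Subgroup.zpowers z → ℤ,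
      IsCircularOrdering cbar ∧
      ∀ g₁ g₂ g₃ x₁ x₂ x₃ : G,
        ((∃ k : ℤ, x₁ = g₁ * z ^ k) ∧ ¬lt x₁ 1 ∧ lt x₁ z) →
        ((∃ k : ℤ, x₂ = g₂ * z ^ k) ∧ ¬lt x₂ 1 ∧ lt x₂ z) →
        ((∃ k : ℤ, x₃ = g₃ * z ^ k) ∧ ¬lt x₃ 1 ∧ lt x₃ z) →
        (g₁ : G ⧸ Subgroup.zpowers z) ≠ (g₂ : G ⧸ Subgroup.zpowers z) →
        (g₂ : G ⧸ Subgroup.zpowers z) ≠ (g₃ : G ⧸ Subgroup.zpowers z) →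
        (g₁ : G ⧸ Subgroup.zpowers z) ≠ (g₃ : G ⧸ Subgroup.zpowers z) →
        cbar (g₁ : G ⧸ Subgroup.zpowers z) (g₂ : G ⧸ Subgroup.zpowers z)
            (g₃ : G ⧸ Subgroup.zpowers z) =
          if (lt x₁ x₂ ∧ lt x₂ x₃) ∨ (lt x₂ x₃ ∧ lt x₃ x₁) ∨ (lt x₃ x₁ ∧ lt x₁ x₂) then 1
          else -1 := by
  -- its `<` is `lt` by definition, so the hypotheses on `lt` can be passed on as they are
  let _ := linearOrderOfSTO lt
  have : MulLeftMono G := ⟨fun f g h hgh =>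
    hgh.eq_or_lt.elim (fun e => e ▸ le_rfl) fun hlt => le_of_lt (hinv f g h hlt)⟩
  have hz : ∀ g, Commute z g := hzc
  have hrep : ∀ {g x : G}, ((∃ k : ℤ, x = g * z ^ k) ∧ ¬lt x 1 ∧ lt x z) → minRep z g = x := by
    rintro g _ ⟨⟨k, rfl⟩, hx₁, hx₂⟩
    rw [← QuotientGroup.mk_mul_of_mem g (Subgroup.zpow_mem_zpowers z k)]
    exact minRep_mk hz ⟨not_lt.1 hx₁, hx₂⟩
  refine ⟨fun g => ?_, quotientCyclicOrient z,
    isCircularOrdering_quotientCyclicOrient hz hzpos hcof, ?_⟩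
  · have h := existsUnique_mem_Ico_mul_zpow hz hzpos hcof g
    simp only [Set.mem_Ico, ← not_lt] at h
    exact h
  intro g₁ g₂ g₃ x₁ x₂ x₃ h₁ h₂ h₃ h₁₂ h₂₃ h₁₃
  rw [quotientCyclicOrient, hrep h₁, hrep h₂, hrep h₃, cyclicOrient_of_ne]
  · -- the two sides differ only in their `Decidable` instances
    exact if_congr Iff.rfl rfl rfl
  · rw [← hrep h₁, ← hrep h₂]; exact (minRep_injective hz hzpos hcof).ne h₁₂
  · rw [← hrep h₂, ← hrep h₃]; exact (minRep_injective hz hzpos hcof).ne h₂₃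
  · rw [← hrep h₁, ← hrep h₃]; exact (minRep_injective hz hzpos hcof).ne h₁₃
end
end

section
/- Let (G,<) be a left-ordered group with a central, positive, cofinal element z, and let Ḡ = G/⟨z⟩. Define f_< : Ḡ² → ℤ by z^{f_<(a⟨z⟩,b⟨z⟩)} = (ā)(b̄)(ab̄)⁻¹ where x̄ denotes the minimal representative of x⟨z⟩ (the unique element of the coset with id ≤ x̄ < z). Then f_< = f_{c_<}, where c_< is the circular ordering on Ḡ induced by < and f_{c_<} is its associated 2-cocycle. -/
open scoped Classical

noncomputable section

/-! Write `m a * m b = z ^ e * m (a * b)`. All three minimal representatives lie in `[1, z)` and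
`z` is central, so `z ^ e ≤ m a * m b < z ^ 2` and `1 ≤ m a * m b < z ^ (e + 1)`, forcing
`e ∈ {0, 1}`, with `e = 0` exactly when `m a ≤ m (a * b)`. Since `m 1 = 1` is the least of all
minimal representatives, the triple `(1, ā, ab̄)` is positively oriented for `c_<` exactly when
`m a < m (a * b)`, which is the condition for `f_{c_<}(ā, b̄) = 0`. -/

section LeftOrderedGroup

variable {G : Type*} [Group G] [LinearOrder G] [MulLeftMono G] {z : G}

theorem zpow_right_strictMono_of_one_lt (hz : 1 < z) : StrictMono fun k : ℤ => z ^ k :=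
  strictMono_int_of_lt_succ fun k => by
    simpa only [zpow_add_one, mul_one] using mul_lt_mul_right hz (z ^ k)

theorem eq_one_of_mem_zpowers_of_one_le_of_lt {x : G} (hxz_mem : x ∈ Subgroup.zpowers z)
    (hx : 1 ≤ x) (hxz : x < z) : x = 1 := by
  obtain ⟨k, rfl⟩ := Subgroup.mem_zpowers_iff.1 hxz_mem
  have mono := zpow_right_strictMono_of_one_lt (hx.trans_lt hxz)
  have h0 : 0 ≤ k := mono.le_iff_le.1 (by simpa only [zpow_zero] using hx)
  have h1 : k < 1 := mono.lt_iff_lt.1 (by simpa only [zpow_one] using hxz)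
  rw [show k = 0 by omega, zpow_zero]

theorem zpow_exponent_eq_ite_of_mul_eq {x y w : G} {e : ℤ} (hzx : Commute z x)
    (hx : 1 ≤ x) (hxz : x < z) (hy : 1 ≤ y) (hyz : y < z) (hw : 1 ≤ w) (hwz : w < z)
    (h : x * y = z ^ e * w) : e = if x ≤ w then 0 else 1 := by
  have mono := zpow_right_strictMono_of_one_lt (hx.trans_lt hxz)
  have hxy : x * y < x * z := mul_lt_mul_right hyz x
  have hxy_le : x ≤ x * y := le_mul_of_one_le_right' hy
  have hlt_sq : x * y < z ^ (2 : ℤ) := by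
    calc x * y < z * x := hzx.eq ▸ hxy
      _ < z * z := mul_lt_mul_right hxz z
      _ = z ^ (2 : ℤ) := by rw [zpow_two]
  have hlower : z ^ e ≤ x * y := h ▸ le_mul_of_one_le_right' hw
  have hupper : x * y < z ^ (e + 1) := by
    rw [h, zpow_add_one]; exact mul_lt_mul_right hwz _
  have he2 : e < 2 := mono.lt_iff_lt.1 (hlower.trans_lt hlt_sq)
  have he0 : 0 < e + 1 :=
    mono.lt_iff_lt.1 (by simpa only [zpow_zero] using (hx.trans hxy_le).trans_lt hupper)
  obtain rfl | rfl : e = 0 ∨ e = 1 := by omega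
  · rw [zpow_zero, one_mul] at h
    rw [if_pos (h ▸ hxy_le)]
  · rw [zpow_one] at h
    have hwx : w < x := lt_of_mul_lt_mul_left' (h ▸ hzx.eq ▸ hxy)
    rw [if_neg hwx.not_ge]

end LeftOrderedGroup

theorem eq_iff_mk_eq_of_eq_zpow_mul {G : Type*} [Group G] {z : G} [(Subgroup.zpowers z).Normal]
    {m : G → G} (hrep : ∀ g : G, ∃ k : ℤ, m g = z ^ k * g)
    (hmc : ∀ g g' : G, (∃ k : ℤ, g' = g * z ^ k) → m g = m g') (g g' : G) :
    m g = m g' ↔ (g : G ⧸ Subgroup.zpowers z) = g' := by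
  have hm_mk (g : G) : (m g : G ⧸ Subgroup.zpowers z) = g := by
    obtain ⟨k, hk⟩ := hrep g
    rw [hk, QuotientGroup.mk_mul, (QuotientGroup.eq_one_iff _).2 (Subgroup.zpow_mem_zpowers z k),
      one_mul]
  refine ⟨fun h => by rw [← hm_mk g, h, hm_mk], fun h => hmc g g' ?_⟩
  obtain ⟨k, hk⟩ := Subgroup.mem_zpowers_iff.1 (QuotientGroup.eq.1 h)
  exact ⟨k, by rw [hk, mul_inv_cancel_left]⟩

theorem fc_of_ne_one {Q : Type*} [Group Q] (c : Q → Q → Q → ℤ) {a b : Q} (ha : a ≠ 1)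
    (hb : b ≠ 1) : fc c a b = if c 1 a (a * b) = 1 then 0 else 1 := by
  simp only [fc, ha, hb, false_or]

theorem cyclically_ordered_iff_of_lt {α : Type*} [LinearOrder α] {x y w : α} (hy : x < y)
    (hw : x < w) :
    ((x < y ∧ y < w) ∨ (y < w ∧ w < x) ∨ (w < x ∧ x < y)) ↔ y < w := by
  simp only [hy, true_and, hw.not_gt, and_false, false_and, or_false]

theorem fc_mk_eq_ite_le {G α : Type*} [Group G] [LinearOrder α] {N : Subgroup G} [N.Normal]
    (c : G ⧸ N → G ⧸ N → G ⧸ N → ℤ) (hc : IsCircularOrdering c) (m : G → α)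
    (hm_eq : ∀ g g' : G, m g = m g' ↔ (g : G ⧸ N) = g') (hm_min : ∀ g : G, m 1 ≤ m g)
    (hcm : ∀ g₁ g₂ g₃ : G, (g₁ : G ⧸ N) ≠ g₂ → (g₂ : G ⧸ N) ≠ g₃ → (g₁ : G ⧸ N) ≠ g₃ →
      c g₁ g₂ g₃ = if (m g₁ < m g₂ ∧ m g₂ < m g₃) ∨ (m g₂ < m g₃ ∧ m g₃ < m g₁) ∨
        (m g₃ < m g₁ ∧ m g₁ < m g₂) then 1 else -1)
    (a b : G) : fc c a b = if m a ≤ m (a * b) then 0 else 1 := by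
  have hm_pos : ∀ g : G, (g : G ⧸ N) ≠ 1 → m 1 < m g := fun g hg =>
    (hm_min g).lt_of_ne fun h => hg ((hm_eq 1 g).1 h).symm
  by_cases ha : (a : G ⧸ N) = 1
  · have : m a = m 1 := (hm_eq a 1).2 ha
    simp only [fc, ha, true_or, ↓reduceIte, this, hm_min]
  by_cases hb : (b : G ⧸ N) = 1
  · have : m (a * b) = m a := (hm_eq _ _).2 (by rw [QuotientGroup.mk_mul, hb, mul_one])
    simp only [fc, hb, true_or, or_true, ↓reduceIte, this, le_refl]
  rw [fc_of_ne_one c ha hb]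
  by_cases hab : (a : G ⧸ N) * b = 1
  · have hmab : m (a * b) = m 1 := (hm_eq _ _).2 (by rw [QuotientGroup.mk_mul, hab]; rfl)
    have hc0 : c 1 a 1 = 0 := (hc.1 1 a 1).2 (Or.inr (Or.inr rfl))
    rw [hab, hc0, hmab, if_neg zero_ne_one, if_neg (hm_pos a ha).not_ge]
  have hcab := hcm 1 a (a * b) (Ne.symm ha) (by simpa [QuotientGroup.mk_mul] using hb)
    (by simpa [QuotientGroup.mk_mul, eq_comm] using hab)
  simp only [QuotientGroup.mk_one, QuotientGroup.mk_mul, cyclically_ordered_iff_of_lt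
    (hm_pos a ha) (hm_pos _ (by rwa [QuotientGroup.mk_mul]))] at hcab
  have hne : m a ≠ m (a * b) := fun h =>
    hb (left_eq_mul.1 (by rw [← QuotientGroup.mk_mul]; exact (hm_eq _ _).1 h))
  rw [hcab]
  by_cases hlt : m a < m (a * b) <;> simp [hlt, hne.le_iff_lt]

theorem stmt4_general {G : Type*} [Group G] (lt : G → G → Prop)
    (hsto : IsStrictTotalOrder G lt)
    (hinv : ∀ f g h : G, lt g h → lt (f * g) (f * h))
    (z : G) (hzc : ∀ g : G, z * g = g * z)
    [hnrm : (Subgroup.zpowers z).Normal]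
    (m : G → G)
    (hm : ∀ g : G, (∃ k : ℤ, m g = g * z ^ k) ∧ ¬lt (m g) 1 ∧ lt (m g) z)
    (hmc : ∀ g g' : G, (∃ k : ℤ, g' = g * z ^ k) → m g = m g')
    (cbar : G ⧸ Subgroup.zpowers z → G ⧸ Subgroup.zpowers z → G ⧸ Subgroup.zpowers z → ℤ)
    (hcbar : IsCircularOrdering cbar)
    (hcbar' : ∀ g₁ g₂ g₃ : G,
        (g₁ : G ⧸ Subgroup.zpowers z) ≠ (g₂ : G ⧸ Subgroup.zpowers z) →
        (g₂ : G ⧸ Subgroup.zpowers z) ≠ (g₃ : G ⧸ Subgroup.zpowers z) →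
        (g₁ : G ⧸ Subgroup.zpowers z) ≠ (g₃ : G ⧸ Subgroup.zpowers z) →
        cbar (g₁ : G ⧸ Subgroup.zpowers z) (g₂ : G ⧸ Subgroup.zpowers z)
            (g₃ : G ⧸ Subgroup.zpowers z) =
          if (lt (m g₁) (m g₂) ∧ lt (m g₂) (m g₃)) ∨ (lt (m g₂) (m g₃) ∧ lt (m g₃) (m g₁)) ∨
              (lt (m g₃) (m g₁) ∧ lt (m g₁) (m g₂)) then 1 else -1) :
    ∀ a b : G,
      m a * m b * (m (a * b))⁻¹ =
        z ^ (fc cbar (a : G ⧸ Subgroup.zpowers z) (b : G ⧸ Subgroup.zpowers z)) := by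
  let := linearOrderOfSTO lt
  have : MulLeftStrictMono G := ⟨fun f _ _ h => hinv f _ _ h⟩
  have := mulLeftMono_of_mulLeftStrictMono G
  have hm_one_le (g : G) : 1 ≤ m g := not_lt.1 (hm g).2.1
  have hm_rep (g : G) : ∃ k : ℤ, m g = z ^ k * g := by
    obtain ⟨k, hk⟩ := (hm g).1
    exact ⟨k, hk.trans ((Commute.zpow_left (hzc g) k).eq.symm)⟩
  have hm_eq := eq_iff_mk_eq_of_eq_zpow_mul hm_rep hmc
  have hm_one : m 1 = 1 := by
    obtain ⟨k, hk⟩ := hm_rep 1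
    rw [mul_one] at hk
    exact eq_one_of_mem_zpowers_of_one_le_of_lt (hk ▸ Subgroup.zpow_mem_zpowers z k)
      (hm_one_le 1) (hm 1).2.2
  intro a b
  obtain ⟨p, hp⟩ := hm_rep a
  obtain ⟨q, hq⟩ := hm_rep b
  obtain ⟨r, hr⟩ := hm_rep (a * b)
  have hcarry : m a * m b = z ^ (p + q - r) * m (a * b) := by
    rw [hp, hq, hr, ← mul_assoc (z ^ (p + q - r)), ← zpow_add, sub_add_cancel, mul_assoc (z ^ p),
      ← mul_assoc a, ← (Commute.zpow_left (hzc a) q).eq, mul_assoc (z ^ q), ← mul_assoc,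
      ← zpow_add]
  rw [fc_mk_eq_ite_le cbar hcbar m hm_eq (fun g => hm_one.symm ▸ hm_one_le g)
      (by convert hcbar' <;> exact Iff.rfl) a b,
    ← zpow_exponent_eq_ite_of_mul_eq (hzc (m a)) (hm_one_le a) (hm a).2.2 (hm_one_le b) (hm b).2.2
      (hm_one_le (a * b)) (hm (a * b)).2.2 hcarry, hcarry, mul_inv_cancel_right]

/-- `f_< = f_{c_<}` : the cocycle measuring the failure of the minimal-representative section
to be a homomorphism equals the cocycle associated to the induced circular ordering. -/
theorem stmt4 {G : Type*} [Group G] (lt : G → G → Prop)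
    (hsto : IsStrictTotalOrder G lt)
    (hinv : ∀ f g h : G, lt g h → lt (f * g) (f * h))
    (z : G) (hzc : ∀ g : G, z * g = g * z) (hzpos : lt 1 z)
    (hcof : ∀ g : G, ∃ k : ℤ, lt (z ^ (-k)) g ∧ lt g (z ^ k))
    [hnrm : (Subgroup.zpowers z).Normal]
    (m : G → G)
    (hm : ∀ g : G, (∃ k : ℤ, m g = g * z ^ k) ∧ ¬lt (m g) 1 ∧ lt (m g) z)
    (hmc : ∀ g g' : G, (∃ k : ℤ, g' = g * z ^ k) → m g = m g')
    (cbar : G ⧸ Subgroup.zpowers z → G ⧸ Subgroup.zpowers z → G ⧸ Subgroup.zpowers z → ℤ)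
    (hcbar : IsCircularOrdering cbar)
    (hcbar' : ∀ g₁ g₂ g₃ : G,
        (g₁ : G ⧸ Subgroup.zpowers z) ≠ (g₂ : G ⧸ Subgroup.zpowers z) →
        (g₂ : G ⧸ Subgroup.zpowers z) ≠ (g₃ : G ⧸ Subgroup.zpowers z) →
        (g₁ : G ⧸ Subgroup.zpowers z) ≠ (g₃ : G ⧸ Subgroup.zpowers z) →
        cbar (g₁ : G ⧸ Subgroup.zpowers z) (g₂ : G ⧸ Subgroup.zpowers z)
            (g₃ : G ⧸ Subgroup.zpowers z) =
          if (lt (m g₁) (m g₂) ∧ lt (m g₂) (m g₃)) ∨ (lt (m g₂) (m g₃) ∧ lt (m g₃) (m g₁)) ∨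
              (lt (m g₃) (m g₁) ∧ lt (m g₁) (m g₂)) then 1 else -1) :
    ∀ a b : G,
      m a * m b * (m (a * b))⁻¹ =
        z ^ (fc cbar (a : G ⧸ Subgroup.zpowers z) (b : G ⧸ Subgroup.zpowers z)) :=
  stmt4_general lt hsto hinv z hzc (hnrm := hnrm) m hm hmc cbar hcbar hcbar'
end
end

section
/- Let (G,c) be a circularly-ordered group with lift (G̃, <_c, z_c), where G̃ has underlying set ℤ × G with multiplication twisted by f_c, z_c = (1,id), and positive cone {(n,a) : n ≥ 0} \ {(0,id)}. Let η_G : G̃/⟨z_c⟩ → G be the isomorphism (n,a)⟨z_c⟩ ↦ a. Then the pullback along η_G of c equals the circular ordering c_{<_c} induced on G̃/⟨z_c⟩ by the quotient construction; i.e., c(a₁,a₂,a₃) = c_{<_c}((n₁,a₁)⟨z_c⟩,(n₂,a₂)⟨z_c⟩,(n₃,a₃)⟨z_c⟩) for all nᵢ ∈ ℤ, aᵢ ∈ G. -/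
open scoped Classical

noncomputable section

section Aux
variable {G : Type*} [Group G] (c : G → G → G → ℤ)

lemma alt12 (hc : IsCircularOrdering c) (a b d : G) : c b a d = -c a b d := by
  have h := hc.2.2.1 a b a d
  have h1 : c a a d = 0 := (hc.1 a a d).2 (Or.inl rfl)
  have h2 : c a b a = 0 := (hc.1 a b a).2 (Or.inr (Or.inr rfl))
  omega

lemma alt23 (hc : IsCircularOrdering c) (a b d : G) : c a d b = -c a b d := by
  have h := hc.2.2.1 a b d b
  have h1 : c b d b = 0 := (hc.1 b d b).2 (Or.inr (Or.inr rfl))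
  have h2 : c a b b = 0 := (hc.1 a b b).2 (Or.inr (Or.inl rfl))
  omega

lemma cyc (hc : IsCircularOrdering c) (a b d : G) : c a b d = c b d a := by
  have := alt23 c hc b a d
  have := alt12 c hc a b d
  omega

lemma fc_self_inv (hc : IsCircularOrdering c) (a : G) : fc c a a⁻¹ = if a = 1 then 0 else 1 := by
  unfold fc
  have h0 : c 1 a (a * a⁻¹) = 0 := by
    rw [mul_inv_cancel]
    exact (hc.1 1 a 1).2 (Or.inr (Or.inr rfl))
  by_cases ha : a = 1
  · simp [ha]
  · rw [mul_inv_cancel] at h0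
    simp [ha, h0, inv_eq_one]

lemma fc_inv_mul (hc : IsCircularOrdering c) (a b : G) :
    fc c a⁻¹ b = if a = 1 ∨ b = 1 ∨ c 1 a b = -1 then 0 else 1 := by
  unfold fc
  have key : c 1 a⁻¹ (a⁻¹ * b) = -c 1 a b := by
    have h := hc.2.2.2 a 1 a⁻¹ (a⁻¹ * b)
    simp only [mul_one, mul_inv_cancel, mul_inv_cancel_left] at h
    rw [← h, alt12 c hc]
  rw [key, inv_eq_one]
  congr 1
  simp only [eq_iff_iff]
  constructor
  · rintro (h|h|h)
    · exact Or.inl h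
    · exact Or.inr (Or.inl h)
    · exact Or.inr (Or.inr (by omega))
  · rintro (h|h|h)
    · exact Or.inl h
    · exact Or.inr (Or.inl h)
    · exact Or.inr (Or.inr (by omega))

end Aux

section Aux2
variable {G : Type*} [Group G] (c : G → G → G → ℤ)

lemma ltT_char (hc : IsCircularOrdering c) (a b : G) :
    ltT c ((0:ℤ),a) ((0:ℤ),b) ↔
      (a = 1 ∧ b ≠ 1) ∨ (a ≠ 1 ∧ b ≠ 1 ∧ a ≠ b ∧ c 1 a b = 1) := by
  unfold ltT mulT invT posT
  simp only [Set.mem_setOf_eq, neg_zero, zero_sub, add_zero, Prod.mk.injEq, not_and,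
    Prod.ext_iff]
  rw [fc_self_inv c hc, fc_inv_mul c hc]
  have hval := hc.2.1 1 a b
  have hzero := hc.1 1 a b
  by_cases ha : a = 1 <;> by_cases hb : b = 1 <;> by_cases hab : a = b
  all_goals simp_all [inv_mul_eq_one]
  rcases hval with h|h|h
  · simp [h, hab, inv_mul_eq_one]
  · rcases h with h|h
    · exact (ha h.symm).elim
    · exact (hb h.symm).elim
  · simp [h, hab, inv_mul_eq_one]

lemma lt_total (hc : IsCircularOrdering c) {a b : G} (hab : a ≠ b) :
    ltT c ((0:ℤ),a) ((0:ℤ),b) ∨ ltT c ((0:ℤ),b) ((0:ℤ),a) := by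
  rw [ltT_char c hc, ltT_char c hc]
  by_cases ha : a = 1
  · exact Or.inl (Or.inl ⟨ha, fun h => hab (ha.trans h.symm)⟩)
  by_cases hb : b = 1
  · exact Or.inr (Or.inl ⟨hb, ha⟩)
  rcases hc.2.1 1 a b with h|h|h
  · exact Or.inl (Or.inr ⟨ha, hb, hab, h⟩)
  · rcases (hc.1 1 a b).1 h with h'|h'|h'
    · exact (ha h'.symm).elim
    · exact (hab h').elim
    · exact (hb h'.symm).elim
  · refine Or.inr (Or.inr ⟨hb, ha, hab.symm, ?_⟩)
    have := alt23 c hc 1 a b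
    omega

lemma lt_key (hc : IsCircularOrdering c) {x y z : G} (_hxy : x ≠ y) (_hyz : y ≠ z)
    (_hxz : x ≠ z) (h1 : ltT c ((0:ℤ),x) ((0:ℤ),y)) (h2 : ltT c ((0:ℤ),y) ((0:ℤ),z)) :
    c x y z = 1 := by
  rw [ltT_char c hc] at h1 h2
  rcases h1 with ⟨hx1, hy1⟩ | ⟨hx1, hy1, -, hcxy⟩
  · rcases h2 with ⟨hy1', -⟩ | ⟨-, -, -, hcyz⟩
    · exact (hy1 hy1').elim
    · rw [hx1]; exact hcyz
  · rcases h2 with ⟨hy1', -⟩ | ⟨-, hz1, -, hcyz⟩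
    · exact (hy1 hy1').elim
    · have hco := hc.2.2.1 1 x y z
      have hv1 := hc.2.1 x y z
      have hv2 := hc.2.1 1 x z
      omega

end Aux2

/-- Pulling back `c` along `η_G : G̃/⟨z_c⟩ → G` gives the circular ordering induced by the
quotient construction: `(0,a)` is the minimal representative of the coset of `(n,a)`, and
`c a₁ a₂ a₃` equals the sign of the permutation sorting the minimal representatives. -/
theorem stmt5 {G : Type*} [Group G] (c : G → G → G → ℤ) (hc : IsCircularOrdering c) :
    (∀ (n : ℤ) (a : G), (∃ k : ℤ, ((0 : ℤ), a) = mulT c (n, a) ((k : ℤ), (1 : G))) ∧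
        ¬ltT c ((0 : ℤ), a) ((0 : ℤ), (1 : G)) ∧ ltT c ((0 : ℤ), a) ((1 : ℤ), (1 : G))) ∧
    ∀ a₁ a₂ a₃ : G,
      c a₁ a₂ a₃ =
        if a₁ ≠ a₂ ∧ a₂ ≠ a₃ ∧ a₁ ≠ a₃ then
          (if (ltT c ((0 : ℤ), a₁) ((0 : ℤ), a₂) ∧ ltT c ((0 : ℤ), a₂) ((0 : ℤ), a₃)) ∨
              (ltT c ((0 : ℤ), a₂) ((0 : ℤ), a₃) ∧ ltT c ((0 : ℤ), a₃) ((0 : ℤ), a₁)) ∨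
              (ltT c ((0 : ℤ), a₃) ((0 : ℤ), a₁) ∧ ltT c ((0 : ℤ), a₁) ((0 : ℤ), a₂)) then 1
           else -1)
        else 0 := by
  constructor
  · intro n a
    refine ⟨⟨-n, ?_⟩, ?_, ?_⟩
    · simp [mulT, fc]
    · rw [ltT_char c hc]
      simp
    · by_cases ha : a = 1
      · subst ha
        unfold ltT mulT invT posT fc
        simp [Prod.ext_iff]
      · unfold ltT mulT invT posT
        rw [fc_self_inv c hc]
        have h0 : fc c a⁻¹ 1 = 0 := by unfold fc; simp
        rw [h0]
        simp [ha, Prod.ext_iff, inv_eq_one]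
  · intro a₁ a₂ a₃
    split_ifs with hdis hcy
    · rcases hcy with ⟨h12, h23⟩ | ⟨h23, h31⟩ | ⟨h31, h12⟩
      · exact lt_key c hc hdis.1 hdis.2.1 hdis.2.2 h12 h23
      · rw [cyc c hc]
        exact lt_key c hc hdis.2.1 (Ne.symm hdis.2.2) (Ne.symm hdis.1) h23 h31
      · rw [cyc c hc, cyc c hc]
        exact lt_key c hc (Ne.symm hdis.2.2) hdis.1 (Ne.symm hdis.2.1) h31 h12
    · obtain ⟨h1, h2, h3⟩ := hdis
      have hA := alt12 c hc a₁ a₂ a₃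
      have hB := alt23 c hc a₁ a₂ a₃
      have hC := cyc c hc a₁ a₂ a₃
      rcases lt_total c hc h1 with h12 | h21 <;>
        rcases lt_total c hc h2 with h23 | h32 <;>
          rcases lt_total c hc h3 with h13 | h31
      · exact absurd (Or.inl ⟨h12, h23⟩) hcy
      · exact absurd (Or.inl ⟨h12, h23⟩) hcy
      · have := lt_key c hc h3 (Ne.symm h2) h1 h13 h32
        omega
      · exact absurd (Or.inr (Or.inr ⟨h31, h12⟩)) hcy
      · have := lt_key c hc (Ne.symm h1) h3 h2 h21 h13
        have h' := alt12 c hc a₂ a₁ a₃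
        omega
      · exact absurd (Or.inr (Or.inl ⟨h23, h31⟩)) hcy
      · have := lt_key c hc (Ne.symm h2) (Ne.symm h1) (Ne.symm h3) h32 h21
        have h' := alt12 c hc a₃ a₂ a₁
        have h'' := cyc c hc a₂ a₃ a₁
        have h''' := cyc c hc a₃ a₁ a₂
        omega
      · have := lt_key c hc (Ne.symm h2) (Ne.symm h1) (Ne.symm h3) h32 h21
        have h' := alt12 c hc a₃ a₂ a₁
        have h'' := cyc c hc a₂ a₃ a₁
        have h''' := cyc c hc a₃ a₁ a₂
        omega
    · push_neg at hdis
      by_cases e1 : a₁ = a₂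
      · exact (hc.1 a₁ a₂ a₃).2 (Or.inl e1)
      by_cases e2 : a₂ = a₃
      · exact (hc.1 a₁ a₂ a₃).2 (Or.inr (Or.inl e2))
      · exact (hc.1 a₁ a₂ a₃).2 (Or.inr (Or.inr (hdis e1 e2)))
end
end

section
/- Let (G,<,z) be a left-ordered group with central, positive, cofinal element z, and let g ∈ G. Then the circular ordering on G/⟨z⟩ induced by the conjugate ordering <^g (defined by a <^g b iff ag < bg) equals the conjugate by g⟨z⟩ of the circular ordering induced by <; that is, c_{<^g} = (c_<)^{g⟨z⟩}, where c^{h}(x₁,x₂,x₃) := c(x₁h, x₂h, x₃h). -/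
/-!
The circular ordering `c_<` compares the representatives of cosets of `⟨z⟩` lying in the
fundamental domain `[1, z)`, while `c_{<^g}` evaluated at `a₁, a₂, a₃` compares, for `<`, the
representatives `m'(aᵢ) g ∈ [g, zg)` of the cosets `aᵢ g ⟨z⟩`. So everything reduces to the
cyclic order of representatives not depending on the fundamental domain `[v, zv)`. Moving the
representatives from `[u, zu)` to `[v, zv)` multiplies each by a power of `z`, and along
`[u, zu)` this exponent drops by one at most once: a sorted triple is only rotated.
-/

open Set

theorem exists_mul_eq_mul_mul_zpow_iff {G : Type*} [Group G] {z g : G} (hzg : Commute z g)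
    (b c : G) : (∃ k : ℤ, c * g = b * g * z ^ k) ↔ ∃ k : ℤ, c = b * z ^ k := by
  have hswap (k : ℤ) : b * g * z ^ k = b * z ^ k * g := by
    rw [mul_assoc, ← (hzg.zpow_left k).eq, ← mul_assoc]
  simp only [hswap, mul_left_inj]

section LeftOrderedGroup

variable {G : Type*} [Group G] [LinearOrder G] [MulLeftMono G] {z : G}

theorem zpow_right_strictMono_of_mulLeftMono (hz : 1 < z) : StrictMono fun n : ℤ ↦ z ^ n :=
  strictMono_int_of_lt_succ fun n ↦ by
    simpa only [zpow_add_one] using lt_mul_of_one_lt_right' (z ^ n) hz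

theorem mul_zpow_lt_mul_zpow_iff_right (hz : 1 < z) (a : G) {j k : ℤ} :
    a * z ^ j < a * z ^ k ↔ j < k :=
  (mul_lt_mul_iff_left a).trans (zpow_right_strictMono_of_mulLeftMono hz).lt_iff_lt

theorem mul_zpow_lt_mul_zpow_iff_left (hz : ∀ x, Commute z x) (k : ℤ) {a b : G} :
    a * z ^ k < b * z ^ k ↔ a < b := by
  rw [← ((hz a).zpow_left k).eq, ← ((hz b).zpow_left k).eq, mul_lt_mul_iff_left]

theorem mul_zpow_le_mul_zpow_iff_left (hz : ∀ x, Commute z x) (k : ℤ) {a b : G} :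
    a * z ^ k ≤ b * z ^ k ↔ a ≤ b := by
  simpa only [not_lt] using (mul_zpow_lt_mul_zpow_iff_left hz k).not

theorem mul_zpow_mem_Ico_of_mem_Ico (hz : ∀ x, Commute z x) {v y : G} (hy : y ∈ Ico v (z * v))
    (k : ℤ) : y * z ^ k ∈ Ico (v * z ^ k) (v * z ^ (k + 1)) := by
  rw [(hz v).eq] at hy
  rw [zpow_add_one, ← (((hz z).zpow_right k).eq), ← mul_assoc]
  exact ⟨(mul_zpow_le_mul_zpow_iff_left hz k).2 hy.1, (mul_zpow_lt_mul_zpow_iff_left hz k).2 hy.2⟩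

theorem eq_zero_of_mul_zpow_mem_Ico (hz : ∀ x, Commute z x) (hz1 : 1 < z) {v y : G} {k : ℤ}
    (hy : y ∈ Ico v (z * v)) (hyk : y * z ^ k ∈ Ico v (z * v)) : k = 0 := by
  obtain ⟨lower, upper⟩ := mul_zpow_mem_Ico_of_mem_Ico hz hy k
  rw [(hz v).eq, show v * z = v * z ^ (1 : ℤ) by rw [zpow_one]] at hyk
  have h1 : k < 1 := (mul_zpow_lt_mul_zpow_iff_right hz1 v).1 (lower.trans_lt hyk.2)
  have h2 : 0 < k + 1 := by
    rw [← mul_zpow_lt_mul_zpow_iff_right hz1 v, zpow_zero, mul_one]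
    exact hyk.1.trans_lt upper
  omega

theorem zpow_eq_of_mul_zpow_mem_Ico (hz : ∀ x, Commute z x) (hz1 : 1 < z) {v x : G} {i j : ℤ}
    (hi : x * z ^ i ∈ Ico v (z * v)) (hj : x * z ^ j ∈ Ico v (z * v)) : i = j := by
  have shift : x * z ^ j = x * z ^ i * z ^ (j - i) := by group
  have := eq_zero_of_mul_zpow_mem_Ico hz hz1 hi (shift ▸ hj)
  omega

/-- Since `x < x' < xz`, the element `x' z^j` lies strictly between `y = x z^j` and `yz`. -/
theorem exponent_eq_or_pred_of_lt (hz : ∀ x, Commute z x) (hz1 : 1 < z) {u v x x' : G} {j j' : ℤ}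
    (hx : x ∈ Ico u (z * u)) (hx' : x' ∈ Ico u (z * u)) (hxx' : x < x')
    (hy : x * z ^ j ∈ Ico v (z * v)) (hy' : x' * z ^ j' ∈ Ico v (z * v)) :
    (j' = j ∧ x * z ^ j < x' * z ^ j') ∨ (j' = j - 1 ∧ x' * z ^ j' < x * z ^ j) := by
  have hx'_lt : x' < x * z := (hz x).eq ▸ hx'.2.trans_le (mul_le_mul_right hx.1 z)
  rcases lt_or_ge (x' * z ^ j) (z * v) with hw | hw
  · have hyw : x * z ^ j < x' * z ^ j := (mul_zpow_lt_mul_zpow_iff_left hz j).2 hxx'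
    obtain rfl := zpow_eq_of_mul_zpow_mem_Ico hz hz1 hy' ⟨hy.1.trans hyw.le, hw⟩
    exact Or.inl ⟨rfl, hyw⟩
  · have hwy : x' * z ^ (j - 1) < x * z ^ j := by
      have := (mul_zpow_lt_mul_zpow_iff_left hz (j - 1)).2 hx'_lt
      rwa [show x * z * z ^ (j - 1) = x * z ^ j by group] at this
    have hvw : v ≤ x' * z ^ (j - 1) := by
      have := (mul_zpow_le_mul_zpow_iff_left hz (-1)).2 hw
      rwa [show z * v * z ^ (-1 : ℤ) = v by rw [(hz v).eq]; group,
        show x' * z ^ j * z ^ (-1 : ℤ) = x' * z ^ (j - 1) by group] at this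
    obtain rfl := zpow_eq_of_mul_zpow_mem_Ico hz hz1 hy' ⟨hvw, hwy.trans hy.2⟩
    exact Or.inr ⟨rfl, hwy⟩

attribute [local instance] LinearOrder.toCircularOrder

variable {u v x₁ x₂ x₃ : G} {k₁ k₂ k₃ : ℤ}

theorem sbtw_mul_zpow_of_lt_of_lt (hz : ∀ x, Commute z x) (hz1 : 1 < z)
    (hx₁ : x₁ ∈ Ico u (z * u)) (hx₂ : x₂ ∈ Ico u (z * u)) (hx₃ : x₃ ∈ Ico u (z * u))
    (hy₁ : x₁ * z ^ k₁ ∈ Ico v (z * v)) (hy₂ : x₂ * z ^ k₂ ∈ Ico v (z * v))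
    (hy₃ : x₃ * z ^ k₃ ∈ Ico v (z * v)) (h₁₂ : x₁ < x₂) (h₂₃ : x₂ < x₃) :
    sbtw (x₁ * z ^ k₁) (x₂ * z ^ k₂) (x₃ * z ^ k₃) := by
  rcases exponent_eq_or_pred_of_lt hz hz1 hx₁ hx₂ h₁₂ hy₁ hy₂ with ⟨e₁₂, l₁₂⟩ | ⟨e₁₂, l₁₂⟩ <;>
  rcases exponent_eq_or_pred_of_lt hz hz1 hx₂ hx₃ h₂₃ hy₂ hy₃ with ⟨e₂₃, l₂₃⟩ | ⟨e₂₃, l₂₃⟩ <;>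
  rcases exponent_eq_or_pred_of_lt hz hz1 hx₁ hx₃ (h₁₂.trans h₂₃) hy₁ hy₃ with
    ⟨e₁₃, l₁₃⟩ | ⟨e₁₃, l₁₃⟩ <;>
  first
    | omega
    | exact Or.inl ⟨l₁₂, l₂₃⟩
    | exact Or.inr (Or.inl ⟨l₂₃, l₁₃⟩)
    | exact Or.inr (Or.inr ⟨l₁₃, l₁₂⟩)

theorem sbtw_mul_zpow_of_sbtw (hz : ∀ x, Commute z x) (hz1 : 1 < z)
    (hx₁ : x₁ ∈ Ico u (z * u)) (hx₂ : x₂ ∈ Ico u (z * u)) (hx₃ : x₃ ∈ Ico u (z * u))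
    (hy₁ : x₁ * z ^ k₁ ∈ Ico v (z * v)) (hy₂ : x₂ * z ^ k₂ ∈ Ico v (z * v))
    (hy₃ : x₃ * z ^ k₃ ∈ Ico v (z * v)) (h : sbtw x₁ x₂ x₃) :
    sbtw (x₁ * z ^ k₁) (x₂ * z ^ k₂) (x₃ * z ^ k₃) := by
  rcases h with ⟨h₁₂, h₂₃⟩ | ⟨h₂₃, h₃₁⟩ | ⟨h₃₁, h₁₂⟩
  · exact sbtw_mul_zpow_of_lt_of_lt hz hz1 hx₁ hx₂ hx₃ hy₁ hy₂ hy₃ h₁₂ h₂₃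
  · exact sbtw_cyclic_right (sbtw_mul_zpow_of_lt_of_lt hz hz1 hx₂ hx₃ hx₁ hy₂ hy₃ hy₁ h₂₃ h₃₁)
  · exact sbtw_cyclic_left (sbtw_mul_zpow_of_lt_of_lt hz hz1 hx₃ hx₁ hx₂ hy₃ hy₁ hy₂ h₃₁ h₁₂)

theorem sbtw_mul_zpow_iff (hz : ∀ x, Commute z x) (hz1 : 1 < z)
    (hx₁ : x₁ ∈ Ico u (z * u)) (hx₂ : x₂ ∈ Ico u (z * u)) (hx₃ : x₃ ∈ Ico u (z * u))
    (hy₁ : x₁ * z ^ k₁ ∈ Ico v (z * v)) (hy₂ : x₂ * z ^ k₂ ∈ Ico v (z * v))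
    (hy₃ : x₃ * z ^ k₃ ∈ Ico v (z * v)) :
    sbtw (x₁ * z ^ k₁) (x₂ * z ^ k₂) (x₃ * z ^ k₃) ↔ sbtw x₁ x₂ x₃ := by
  refine ⟨fun h ↦ ?_, sbtw_mul_zpow_of_sbtw hz hz1 hx₁ hx₂ hx₃ hy₁ hy₂ hy₃⟩
  have back : ∀ {x : G} {k : ℤ}, x * z ^ k * z ^ (-k) = x := fun {x k} ↦ by group
  simpa only [back] using sbtw_mul_zpow_of_sbtw (k₁ := -k₁) (k₂ := -k₂) (k₃ := -k₃) hz hz1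
    hy₁ hy₂ hy₃ (by rwa [back]) (by rwa [back]) (by rwa [back]) h

end LeftOrderedGroup

open scoped Classical

/-- `m` and `m'` are the minimal-representative functions for `<` and for `<^g`. -/
theorem stmt10_general {G : Type*} [Group G] (lt : G → G → Prop)
    (hsto : IsStrictTotalOrder G lt)
    (hinv : ∀ f a b : G, lt a b → lt (f * a) (f * b))
    (z : G) (hzc : ∀ x : G, z * x = x * z) (hzpos : lt 1 z)
    (g : G)
    (m m' : G → G)
    (hm : ∀ a : G, (∃ k : ℤ, m a = a * z ^ k) ∧ ¬lt (m a) 1 ∧ lt (m a) z)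
    (hm' : ∀ a : G, (∃ k : ℤ, m' a = a * z ^ k) ∧ ¬lt (m' a * g) (1 * g) ∧
        lt (m' a * g) (z * g)) :
    ∀ a₁ a₂ a₃ : G,
      (if (¬∃ k : ℤ, a₂ = a₁ * z ^ k) ∧ (¬∃ k : ℤ, a₃ = a₂ * z ^ k) ∧
          (¬∃ k : ℤ, a₃ = a₁ * z ^ k) then
        (if (lt (m' a₁ * g) (m' a₂ * g) ∧ lt (m' a₂ * g) (m' a₃ * g)) ∨
            (lt (m' a₂ * g) (m' a₃ * g) ∧ lt (m' a₃ * g) (m' a₁ * g)) ∨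
            (lt (m' a₃ * g) (m' a₁ * g) ∧ lt (m' a₁ * g) (m' a₂ * g)) then (1 : ℤ) else -1)
       else 0) =
      (if (¬∃ k : ℤ, a₂ * g = a₁ * g * z ^ k) ∧ (¬∃ k : ℤ, a₃ * g = a₂ * g * z ^ k) ∧
          (¬∃ k : ℤ, a₃ * g = a₁ * g * z ^ k) then
        (if (lt (m (a₁ * g)) (m (a₂ * g)) ∧ lt (m (a₂ * g)) (m (a₃ * g))) ∨
            (lt (m (a₂ * g)) (m (a₃ * g)) ∧ lt (m (a₃ * g)) (m (a₁ * g))) ∨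
            (lt (m (a₃ * g)) (m (a₁ * g)) ∧ lt (m (a₁ * g)) (m (a₂ * g))) then (1 : ℤ) else -1)
       else 0) := by
  let : LinearOrder G := linearOrderOfSTO lt
  have : MulLeftStrictMono G := ⟨fun f _ _ h ↦ hinv f _ _ h⟩
  have := mulLeftMono_of_mulLeftStrictMono G
  have hz : ∀ x, Commute z x := hzc
  have hrep (a : G) : ∃ k : ℤ, m (a * g) = m' a * g * z ^ k := by
    obtain ⟨⟨p, hp⟩, -⟩ := hm' a
    obtain ⟨⟨q, hq⟩, -⟩ := hm (a * g)
    refine ⟨q - p, ?_⟩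
    rw [hq, hp, mul_assoc a (z ^ p) g, ((hz g).zpow_left p).eq]
    group
  have hm'_mem (a : G) : m' a * g ∈ Ico g (z * g) := by
    obtain ⟨-, hlo, hhi⟩ := hm' a
    rw [one_mul] at hlo
    exact ⟨not_lt.1 hlo, hhi⟩
  have hm_mem (a : G) : m a ∈ Ico 1 (z * 1) := by
    obtain ⟨-, hlo, hhi⟩ := hm a
    exact ⟨not_lt.1 hlo, (mul_one z).symm ▸ hhi⟩
  intro a₁ a₂ a₃
  obtain ⟨k₁, hk₁⟩ := hrep a₁
  obtain ⟨k₂, hk₂⟩ := hrep a₂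
  obtain ⟨k₃, hk₃⟩ := hrep a₃
  simp only [exists_mul_eq_mul_mul_zpow_iff (hz g)]
  refine if_congr Iff.rfl (if_congr ?_ rfl rfl) rfl
  rw [hk₁, hk₂, hk₃]
  exact (sbtw_mul_zpow_iff hz hzpos (hm'_mem a₁) (hm'_mem a₂) (hm'_mem a₃)
    (hk₁ ▸ hm_mem (a₁ * g)) (hk₂ ▸ hm_mem (a₂ * g)) (hk₃ ▸ hm_mem (a₃ * g))).symm

/-- `c_{<^g} = (c_<)^{g⟨z⟩}` : the circular ordering on `G/⟨z⟩` induced by the conjugate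
ordering `<^g` equals the conjugate by `g⟨z⟩` of the one induced by `<`.  Here `m` is the
minimal-representative function for `<` and `m'` the one for `<^g`. -/
theorem stmt10 {G : Type*} [Group G] (lt : G → G → Prop)
    (hsto : IsStrictTotalOrder G lt)
    (hinv : ∀ f a b : G, lt a b → lt (f * a) (f * b))
    (z : G) (hzc : ∀ x : G, z * x = x * z) (hzpos : lt 1 z)
    (hcof : ∀ x : G, ∃ k : ℤ, lt (z ^ (-k)) x ∧ lt x (z ^ k))
    (g : G)
    (m m' : G → G)
    (hm : ∀ a : G, (∃ k : ℤ, m a = a * z ^ k) ∧ ¬lt (m a) 1 ∧ lt (m a) z)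
    (hmc : ∀ a b : G, (∃ k : ℤ, b = a * z ^ k) → m a = m b)
    (hm' : ∀ a : G, (∃ k : ℤ, m' a = a * z ^ k) ∧ ¬lt (m' a * g) (1 * g) ∧
        lt (m' a * g) (z * g))
    (hmc' : ∀ a b : G, (∃ k : ℤ, b = a * z ^ k) → m' a = m' b) :
    ∀ a₁ a₂ a₃ : G,
      (if (¬∃ k : ℤ, a₂ = a₁ * z ^ k) ∧ (¬∃ k : ℤ, a₃ = a₂ * z ^ k) ∧
          (¬∃ k : ℤ, a₃ = a₁ * z ^ k) then
        (if (lt (m' a₁ * g) (m' a₂ * g) ∧ lt (m' a₂ * g) (m' a₃ * g)) ∨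
            (lt (m' a₂ * g) (m' a₃ * g) ∧ lt (m' a₃ * g) (m' a₁ * g)) ∨
            (lt (m' a₃ * g) (m' a₁ * g) ∧ lt (m' a₁ * g) (m' a₂ * g)) then (1 : ℤ) else -1)
       else 0) =
      (if (¬∃ k : ℤ, a₂ * g = a₁ * g * z ^ k) ∧ (¬∃ k : ℤ, a₃ * g = a₂ * g * z ^ k) ∧
          (¬∃ k : ℤ, a₃ * g = a₁ * g * z ^ k) then
        (if (lt (m (a₁ * g)) (m (a₂ * g)) ∧ lt (m (a₂ * g)) (m (a₃ * g))) ∨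
            (lt (m (a₂ * g)) (m (a₃ * g)) ∧ lt (m (a₃ * g)) (m (a₁ * g))) ∨
            (lt (m (a₃ * g)) (m (a₁ * g)) ∧ lt (m (a₁ * g)) (m (a₂ * g))) then (1 : ℤ) else -1)
       else 0) :=
  stmt10_general lt hsto hinv z hzc hzpos g m m' hm hm'
end

section
/- Let (G,c) be a circularly-ordered group and g ∈ G. Then the 2-cocycles f_c and f_{c^g} represent the same class in H²(G;ℤ); i.e., there exists a function d : G → ℤ with f_c(a,b) − f_{c^g}(a,b) = d(a) + d(b) − d(ab) for all a,b ∈ G, where c^g(a₁,a₂,a₃) := c(a₁g, a₂g, a₃g). -/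
open scoped Classical

noncomputable section

/-!
Write `τ(p, q, r) ∈ {0, 1}` (`wind c p q r`) for the indicator that `p → q → r` winds once around the circle
(`(p, q, r)` negatively oriented, or `p = r ≠ q`). Since `2τ = 1 - c + [p = r] - [p = q] - [q = r]`
differs from the cocycle `-c` by a coboundary, `τ` is a left-invariant homogeneous cocycle, and
`f_c(a, b) = τ(1, a, ab)` while `f_{c^g}(a, b) = τ(g, ag, abg)`. Right translation by `g` is
`G`-equivariant, so the prism between the simplices `(1, a, ab)` and `(g, ag, abg)` exhibits the
difference of the two inhomogeneous cocycles as the coboundary of `x ↦ τ(1, x, xg) - τ(1, g, xg)`.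
-/

theorem cocycle_sub_mul_right_eq_coboundary {G A : Type*} [Group G] [AddCommGroup A]
    {τ : G → G → G → A} (hinv : ∀ h p q r, τ (h * p) (h * q) (h * r) = τ p q r)
    (hcoc : ∀ p q r s, τ q r s - τ p r s + τ p q s - τ p q r = 0) (g a b : G) :
    τ 1 a (a * b) - τ g (a * g) (a * b * g) =
      (τ 1 a (a * g) - τ 1 g (a * g)) + (τ 1 b (b * g) - τ 1 g (b * g))
        - (τ 1 (a * b) (a * b * g) - τ 1 g (a * b * g)) := by
  have htop : τ a (a * b) (a * b * g) = τ 1 b (b * g) := by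
    simpa only [mul_one, mul_assoc] using hinv a 1 b (b * g)
  have hmid : τ a (a * g) (a * b * g) = τ 1 g (b * g) := by
    simpa only [mul_one, mul_assoc] using hinv a 1 g (b * g)
  linear_combination (norm := abel)
    hcoc 1 a (a * g) (a * b * g) - hcoc 1 a (a * b) (a * b * g) - hcoc 1 g (a * g) (a * b * g)
      + htop - hmid

def wind {G : Type*} (c : G → G → G → ℤ) (p q r : G) : ℤ :=
  if p = q ∨ q = r then 0 else if p = r ∨ c p q r = -1 then 1 else 0

theorem wind_mul_right {G : Type*} [Group G] (c : G → G → G → ℤ) (g p q r : G) :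
    wind (fun a₁ a₂ a₃ => c (a₁ * g) (a₂ * g) (a₃ * g)) p q r = wind c (p * g) (q * g) (r * g) := by
  simp only [wind, mul_left_inj]

namespace IsCircularOrdering

variable {G : Type*} [Group G] {c : G → G → G → ℤ}

theorem mul_right (hc : IsCircularOrdering c) (g : G) :
    IsCircularOrdering fun a₁ a₂ a₃ => c (a₁ * g) (a₂ * g) (a₃ * g) := by
  obtain ⟨hzero, hval, hcoc, hinv⟩ := hc
  refine ⟨fun a b d => ?_, fun a b d => hval _ _ _, fun a₁ a₂ a₃ a₄ => hcoc _ _ _ _,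
    fun h a₁ a₂ a₃ => ?_⟩
  · simpa only [mul_left_inj] using hzero (a * g) (b * g) (d * g)
  · simpa only [mul_assoc] using hinv h (a₁ * g) (a₂ * g) (a₃ * g)

theorem two_mul_wind (hc : IsCircularOrdering c) (p q r : G) :
    2 * wind c p q r = 1 - c p q r + (if p = r then 1 else 0) - (if p = q then 1 else 0)
      - (if q = r then 1 else 0) := by
  have := hc.1 p q r
  have := hc.2.1 p q r
  unfold wind
  grind

theorem wind_cocycle (hc : IsCircularOrdering c) (p q r s : G) :
    wind c q r s - wind c p r s + wind c p q s - wind c p q r = 0 := by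
  have := hc.two_mul_wind q r s
  have := hc.two_mul_wind p r s
  have := hc.two_mul_wind p q s
  have := hc.two_mul_wind p q r
  have := hc.2.2.1 p q r s
  omega

theorem wind_mul_left (hc : IsCircularOrdering c) (h p q r : G) :
    wind c (h * p) (h * q) (h * r) = wind c p q r := by
  simp only [wind, mul_right_inj, hc.2.2.2]

theorem fc_eq_wind (hc : IsCircularOrdering c) (a b : G) : fc c a b = wind c 1 a (a * b) := by
  have := hc.1 1 a (a * b)
  have := hc.2.1 1 a (a * b)
  have : a = a * b ↔ b = 1 := left_eq_mul
  unfold fc wind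
  grind

end IsCircularOrdering

/-- `[f_c] = [f_{c^g}]` in `H²(G;ℤ)`: the difference is a coboundary. -/
theorem stmt11 {G : Type*} [Group G] (c : G → G → G → ℤ) (hc : IsCircularOrdering c)
    (g : G) :
    ∃ d : G → ℤ, ∀ a b : G,
      fc c a b - fc (fun a₁ a₂ a₃ => c (a₁ * g) (a₂ * g) (a₃ * g)) a b =
        d a + d b - d (a * b) := by
  refine ⟨fun x => wind c 1 x (x * g) - wind c 1 g (x * g), fun a b => ?_⟩
  rw [hc.fc_eq_wind, (hc.mul_right g).fc_eq_wind, wind_mul_right, one_mul]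
  exact cocycle_sub_mul_right_eq_coboundary hc.wind_mul_left hc.wind_cocycle g a b
end
end

section
/- Let (G,c) be a circularly-ordered group and H ⊆ G a subgroup of index at least 3. Then H is convex with respect to c if and only if the function c̄ : (G/H)³ → {−1,0,1}, defined by c̄(g₁H, g₂H, g₃H) = c(g₁,g₂,g₃) when the three cosets are distinct and 0 otherwise, is well-defined (independent of the choice of coset representatives). -/
open scoped Classical

noncomputable section

/-- For `H ≤ G` of index at least 3, `H` is convex with respect to the circular ordering `c`
iff `c` descends to a well-defined function on triples of distinct left cosets. -/
theorem stmt13 {G : Type*} [Group G] (c : G → G → G → ℤ) (hc : IsCircularOrdering c)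
    (H : Subgroup G)
    (hindex : ∃ x y w : G ⧸ H, x ≠ y ∧ y ≠ w ∧ x ≠ w) :
    (∀ g : G, g ∉ H → ∀ f : G, ∀ h₁ ∈ H, ∀ h₂ ∈ H,
        c h₁ g h₂ = 1 → c h₂ f h₁ = 1 → f ∈ H) ↔
      (∀ g₁ g₂ g₃ g₁' g₂' g₃' : G,
        g₁⁻¹ * g₁' ∈ H → g₂⁻¹ * g₂' ∈ H → g₃⁻¹ * g₃' ∈ H →
        g₁⁻¹ * g₂ ∉ H → g₂⁻¹ * g₃ ∉ H → g₁⁻¹ * g₃ ∉ H →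
        c g₁ g₂ g₃ = c g₁' g₂' g₃') := by
  obtain ⟨hzero, hval, hcoc, hinv⟩ := hc
  -- basic symmetry facts
  have swap12 : ∀ a b d : G, c b a d = -c a b d := by
    intro a b d
    have h := hcoc a b a d
    have h1 : c a a d = 0 := (hzero a a d).2 (Or.inl rfl)
    have h2 : c a b a = 0 := (hzero a b a).2 (Or.inr (Or.inr rfl))
    linarith
  have swap23 : ∀ a b d : G, c a d b = -c a b d := by
    intro a b d
    have h := hcoc a b d b
    have h1 : c b d b = 0 := (hzero b d b).2 (Or.inr (Or.inr rfl))
    have h2 : c a b b = 0 := (hzero a b b).2 (Or.inr (Or.inl rfl))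
    linarith
  have cyc : ∀ a b d : G, c a b d = c b d a := by
    intro a b d
    have h1 := swap23 b a d
    have h2 := swap12 a b d
    linarith
  have swap13 : ∀ a b d : G, c d b a = -c a b d := by
    intro a b d
    have h1 := swap12 b d a
    have h2 := swap23 b a d
    have h3 := swap12 a b d
    linarith
  -- coset helpers
  have q : ∀ x y : G, x⁻¹ * y ∈ H ↔ (x : G ⧸ H) = y := fun x y => (QuotientGroup.eq).symm
  have qn : ∀ x y : G, x⁻¹ * y ∉ H ↔ (x : G ⧸ H) ≠ y := fun x y => not_congr (q x y)
  have qm : ∀ x : G, x ∈ H ↔ (x : G ⧸ H) = ((1 : G) : G ⧸ H) := by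
    intro x
    rw [← q]
    simp
  have mixl : ∀ x y : G, x ∈ H → y ∉ H → x⁻¹ * y ∉ H := by
    intro x y hx hy hm
    exact hy (by simpa using H.mul_mem hx hm)
  have mixr : ∀ x y : G, x ∈ H → y ∉ H → y⁻¹ * x ∉ H := by
    intro x y hx hy hm
    exact mixl x y hx hy (by simpa using H.inv_mem hm)
  constructor
  · -- convexity implies well-definedness
    intro hconv g₁ g₂ g₃ g₁' g₂' g₃' e1 e2 e3 d12 d23 d13
    -- key lemma: changing the first entry within its coset does not change c, base case
    have key : ∀ h a b : G, h ∈ H → a ∉ H → b ∉ H → a⁻¹ * b ∉ H → c 1 a b = c h a b := by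
      intro h a b hh ha hb hab
      by_contra hne
      have n1a : (1 : G) ≠ a := fun e => ha (e ▸ H.one_mem)
      have n1b : (1 : G) ≠ b := fun e => hb (e ▸ H.one_mem)
      have nab : a ≠ b := fun e => hab (by simp [e, H.one_mem])
      have nha : h ≠ a := fun e => ha (e ▸ hh)
      have nhb : h ≠ b := fun e => hb (e ▸ hh)
      have v1 : c 1 a b ≠ 0 := by
        intro h0
        rcases (hzero 1 a b).1 h0 with h' | h' | h'
        · exact n1a h'
        · exact nab h'
        · exact n1b h'
      have v2 : c h a b ≠ 0 := by
        intro h0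
        rcases (hzero h a b).1 h0 with h' | h' | h'
        · exact nha h'
        · exact nab h'
        · exact nhb h'
      have V1 := hval 1 a b
      have V2 := hval h a b
      have E := hcoc 1 h a b
      have Vhb := hval 1 h b
      have Vha := hval 1 h a
      have hcase : (c 1 a b = 1 ∧ c h a b = -1) ∨ (c 1 a b = -1 ∧ c h a b = 1) := by
        omega
      rcases hcase with ⟨f1, f2⟩ | ⟨f1, f2⟩
      · have hb1 : c 1 h b = 1 := by omega
        have ha1 : c 1 h a = -1 := by omega
        have r1 : c h b 1 = 1 := by rw [← cyc]; exact hb1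
        have r2 : c 1 a h = 1 := by have := swap23 1 h a; omega
        exact ha (hconv b hb a h hh 1 H.one_mem r1 r2)
      · have ha1 : c 1 h a = 1 := by omega
        have hb1 : c 1 h b = -1 := by omega
        have r1 : c h a 1 = 1 := by rw [← cyc]; exact ha1
        have r2 : c 1 b h = 1 := by have := swap23 1 h b; omega
        exact hb (hconv a ha b h hh 1 H.one_mem r1 r2)
    -- one-slot change lemma
    have slot1 : ∀ a a' b d : G, a⁻¹ * a' ∈ H → a⁻¹ * b ∉ H → a⁻¹ * d ∉ H →
        b⁻¹ * d ∉ H → c a b d = c a' b d := by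
      intro a a' b d haa hab had hbd
      have t1 := hinv a⁻¹ a b d
      have t2 := hinv a⁻¹ a' b d
      rw [inv_mul_cancel] at t1
      rw [← t1, ← t2]
      apply key _ _ _ haa hab had
      have hgr : (a⁻¹ * b)⁻¹ * (a⁻¹ * d) = b⁻¹ * d := by group
      rw [hgr]; exact hbd
    -- coset versions of hypotheses
    have Q1 : (g₁ : G ⧸ H) = g₁' := (q _ _).1 e1
    have Q2 : (g₂ : G ⧸ H) = g₂' := (q _ _).1 e2
    have Q3 : (g₃ : G ⧸ H) = g₃' := (q _ _).1 e3
    have D12 : (g₁ : G ⧸ H) ≠ g₂ := (qn _ _).1 d12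
    have D23 : (g₂ : G ⧸ H) ≠ g₃ := (qn _ _).1 d23
    have D13 : (g₁ : G ⧸ H) ≠ g₃ := (qn _ _).1 d13
    have step1 : c g₁ g₂ g₃ = c g₁' g₂ g₃ := slot1 g₁ g₁' g₂ g₃ e1 d12 d13 d23
    have step2 : c g₂ g₃ g₁' = c g₂' g₃ g₁' := by
      apply slot1 g₂ g₂' g₃ g₁' e2 d23
      · exact (qn _ _).2 (fun e => D12 (by rw [Q1]; exact e.symm))
      · exact (qn _ _).2 (fun e => D13 (by rw [Q1]; exact e.symm))
    have step3 : c g₃ g₁' g₂' = c g₃' g₁' g₂' := by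
      apply slot1 g₃ g₃' g₁' g₂' e3
      · exact (qn _ _).2 (fun e => D13 (by rw [Q1]; exact e.symm))
      · exact (qn _ _).2 (fun e => D23 (by rw [Q2]; exact e.symm))
      · exact (qn _ _).2 (fun e => D12 (by rw [Q1, Q2]; exact e))
    calc c g₁ g₂ g₃ = c g₁' g₂ g₃ := step1
      _ = c g₂ g₃ g₁' := cyc _ _ _
      _ = c g₂' g₃ g₁' := step2
      _ = c g₃ g₁' g₂' := cyc _ _ _
      _ = c g₃' g₁' g₂' := step3
      _ = c g₁' g₂' g₃' := by rw [cyc g₁' g₂' g₃', cyc g₂' g₃' g₁']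
  · -- well-definedness implies convexity
    intro W g hg f h₁ hh₁ h₂ hh₂ hc1 hc2
    by_contra hf
    have one_mem' : ∀ x : G, x⁻¹ * x ∈ H := fun x => by simp [H.one_mem]
    have e12 : h₁⁻¹ * h₂ ∈ H := H.mul_mem (H.inv_mem hh₁) hh₂
    have e21 : h₂⁻¹ * h₁ ∈ H := H.mul_mem (H.inv_mem hh₂) hh₁
    by_cases hgf : g⁻¹ * f ∈ H
    · -- f in the same coset as g: use a third coset
      obtain ⟨x, y, z, nxy, nyz, nxz⟩ := hindex
      have hexists : ∃ w' : G ⧸ H, w' ≠ ((1 : G) : G ⧸ H) ∧ w' ≠ (g : G ⧸ H) := by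
        by_contra hno
        push_neg at hno
        have hall : ∀ w' : G ⧸ H, w' = ((1 : G) : G ⧸ H) ∨ w' = (g : G ⧸ H) := by
          intro w'
          by_cases h' : w' = ((1 : G) : G ⧸ H)
          · exact Or.inl h'
          · exact Or.inr (hno w' h')
        rcases hall x with h1 | h1 <;> rcases hall y with h2 | h2 <;>
          rcases hall z with h3 | h3 <;>
          first
            | exact nxy (h1.trans h2.symm)
            | exact nyz (h2.trans h3.symm)
            | exact nxz (h1.trans h3.symm)
      obtain ⟨w', hw1, hwg⟩ := hexists
      obtain ⟨w, rfl⟩ := QuotientGroup.mk_surjective w'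
      have hw : w ∉ H := fun hm => hw1 ((qm w).1 hm)
      have hgw : g⁻¹ * w ∉ H := (qn _ _).2 (fun e => hwg e.symm)
      have hfg : f⁻¹ * g ∈ H := by simpa using H.inv_mem hgf
      have hfw : f⁻¹ * w ∉ H := by
        intro hm
        exact hgw (by simpa [mul_assoc] using H.mul_mem hgf hm)
      have hfH : f ∉ H := fun hm => hg (by simpa using H.mul_mem hm (H.inv_mem hgf))
      -- well-definedness instances
      have W1 : c g h₂ w = c g h₁ w :=
        W g h₂ w g h₁ w (one_mem' g) e21 (one_mem' w)
          (mixr h₂ g hh₂ hg) (mixl h₂ w hh₂ hw) hgw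
      have W2 : c f h₁ w = c g h₁ w :=
        W f h₁ w g h₁ w hfg (one_mem' h₁) (one_mem' w)
          (mixr h₁ f hh₁ hfH) (mixl h₁ w hh₁ hw) hfw
      have W3 : c h₂ f w = c h₁ g w :=
        W h₂ f w h₁ g w e21 hfg (one_mem' w)
          (mixl h₂ f hh₂ hfH) hfw (mixl h₂ w hh₂ hw)
      have F1 := hcoc h₁ g h₂ w
      have F2 := hcoc h₂ f h₁ w
      have sw1 := swap12 h₁ g w
      have sw2 := swap12 h₁ h₂ w
      omega
    · -- f in a coset distinct from H and gH
      have hfH : f ∉ H := hf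
      have EQ1 : c g f h₁ = c g f h₂ :=
        W g f h₁ g f h₂ (one_mem' g) (one_mem' f) e12
          hgf (mixr h₁ f hh₁ hfH) (mixr h₁ g hh₁ hg)
      have EQ2 : c h₁ g f = c h₂ g f :=
        W h₁ g f h₂ g f e12 (one_mem' g) (one_mem' f)
          (mixl h₁ g hh₁ hg) hgf (mixl h₁ f hh₁ hfH)
      have E1 := hcoc h₂ g f h₁
      have E2 := hcoc h₁ g f h₂
      have S1 := swap13 h₁ g h₂
      have S2 := swap13 h₂ f h₁
      omega
end
end

section
/- Let H be a proper convex subgroup of a circularly-ordered group (G,c), and let P be the positive cone on H given by P = {h ∈ H : c(id,h,g) = 1 for some g ∈ G \ H}. Define d : H → ℤ by d(id) = 0, d(h) = 0 if h ∈ P, and d(h) = 1 if h ∉ P (h ≠ id). Then the restriction of f_c to H² is the coboundary of d: f_c(g,h) = d(g) − d(gh) + d(h) for all g,h ∈ H. -/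
open scoped Classical

noncomputable section

/-- The positive cone on a convex subgroup `H` of `(G,c)`:
`P = {h ∈ H : c(1,h,g) = 1 for some g ∈ G \ H}`. -/
def posCone {G : Type*} [Group G] (c : G → G → G → ℤ) (H : Subgroup G) : Set G :=
  {h : G | h ∈ H ∧ ∃ g : G, g ∉ H ∧ c 1 h g = 1}

/-- The function `d : H → ℤ` with `d(1) = 0`, `d(h) = 0` for `h ∈ P`, `d(h) = 1` otherwise. -/
def dConv {G : Type*} [Group G] (c : G → G → G → ℤ) (H : Subgroup G) (h : G) : ℤ :=
  if h = 1 ∨ h ∈ posCone c H then 0 else 1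

/-- On a proper convex subgroup `H`, the restriction of `f_c` is the coboundary of `d`. -/
theorem stmt15 {G : Type*} [Group G] (c : G → G → G → ℤ) (hc : IsCircularOrdering c)
    (H : Subgroup G) (hproper : H ≠ ⊤)
    (hconv : ∀ g : G, g ∉ H → ∀ f : G, ∀ h₁ ∈ H, ∀ h₂ ∈ H,
        c h₁ g h₂ = 1 → c h₂ f h₁ = 1 → f ∈ H) :
    ∀ g ∈ H, ∀ h ∈ H, fc c g h = dConv c H g - dConv c H (g * h) + dConv c H h := by
  obtain ⟨hzero, htot, hcoc, hinv⟩ := hc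
  -- basic symmetries of c
  have swap12 : ∀ a b d : G, c b a d = - c a b d := by
    intro a b d
    have h0 := hcoc a b a d
    have h1 : c a a d = 0 := (hzero a a d).2 (Or.inl rfl)
    have h2 : c a b a = 0 := (hzero a b a).2 (Or.inr (Or.inr rfl))
    linarith
  have swap23 : ∀ a b d : G, c a d b = - c a b d := by
    intro a b d
    have h0 := hcoc a b d b
    have h1 : c b d b = 0 := (hzero b d b).2 (Or.inr (Or.inr rfl))
    have h2 : c a b b = 0 := (hzero a b b).2 (Or.inr (Or.inl rfl))
    linarith
  have cyc : ∀ a b d : G, c b d a = c a b d := by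
    intro a b d
    rw [swap12 d b a, swap23 d a b, swap12 a d b, swap23 a b d]; ring
  have rev : ∀ a b d : G, c d b a = - c a b d := by
    intro a b d
    rw [cyc a d b, swap23 a b d]
  have cne : ∀ a b d : G, a ≠ b → b ≠ d → a ≠ d → c a b d = 1 ∨ c a b d = -1 := by
    intro a b d hab hbd had
    rcases htot a b d with h | h | h
    · exact Or.inl h
    · exact absurd ((hzero a b d).1 h) (by tauto)
    · exact Or.inr h
  -- constancy of c h₁ · h₂ on the complement of H
  have claim : ∀ h₁ ∈ H, ∀ h₂ ∈ H, ∀ g, g ∉ H → ∀ g', g' ∉ H →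
      c h₁ g h₂ = 1 → c h₁ g' h₂ = 1 := by
    intro h₁ hh₁ h₂ hh₂ g hg g' hg' h1
    have hne1 : h₁ ≠ g' := fun e => hg' (e ▸ hh₁)
    have hne2 : g' ≠ h₂ := fun e => hg' (e ▸ hh₂)
    have hne3 : h₁ ≠ h₂ := by
      intro e
      have : c h₁ g h₂ = 0 := (hzero h₁ g h₂).2 (Or.inr (Or.inr e))
      omega
    rcases cne h₁ g' h₂ hne1 hne2 hne3 with h | h
    · exact h
    · exfalso
      have h2 : c h₂ g' h₁ = 1 := by
        have := rev h₁ g' h₂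
        omega
      exact hg' (hconv g hg g' h₁ hh₁ h₂ hh₂ h1 h2)
  have const : ∀ h₁ ∈ H, ∀ h₂ ∈ H, h₁ ≠ h₂ → ∀ g, g ∉ H → ∀ g', g' ∉ H →
      c h₁ g h₂ = c h₁ g' h₂ := by
    intro h₁ hh₁ h₂ hh₂ hne g hg g' hg'
    have hne1 : h₁ ≠ g := fun e => hg (e ▸ hh₁)
    have hne2 : g ≠ h₂ := fun e => hg (e ▸ hh₂)
    have hne1' : h₁ ≠ g' := fun e => hg' (e ▸ hh₁)
    have hne2' : g' ≠ h₂ := fun e => hg' (e ▸ hh₂)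
    rcases cne h₁ g h₂ hne1 hne2 hne with h | h
    · rw [h, claim h₁ hh₁ h₂ hh₂ g hg g' hg' h]
    · rcases cne h₁ g' h₂ hne1' hne2' hne with h' | h'
      · have := claim h₁ hh₁ h₂ hh₂ g' hg' g hg h'
        omega
      · omega
  -- a fixed basepoint outside H
  obtain ⟨g₀, hg₀⟩ : ∃ g, g ∉ H := by
    by_contra hcon
    push_neg at hcon
    exact hproper ((Subgroup.eq_top_iff' H).2 hcon)
  have hg₀1 : g₀ ≠ 1 := fun e => hg₀ (e ▸ H.one_mem)
  -- the sign c 1 x g₀ is independent of the basepoint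
  have sconst : ∀ x ∈ H, x ≠ 1 → ∀ g, g ∉ H → c 1 x g = c 1 x g₀ := by
    intro x hx hx1 g hg
    have e1 : c x g 1 = c x g₀ 1 := const x hx 1 H.one_mem hx1 g hg g₀ hg₀
    rw [← cyc 1 x g, ← cyc 1 x g₀]
    exact e1
  -- d in terms of the sign
  have dval : ∀ x ∈ H, x ≠ 1 → dConv c H x = if c 1 x g₀ = 1 then 0 else 1 := by
    intro x hx hx1
    have hmem : x ∈ posCone c H ↔ c 1 x g₀ = 1 := by
      constructor
      · rintro ⟨-, g, hg, h1⟩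
        rw [← sconst x hx hx1 g hg]; exact h1
      · intro h1; exact ⟨hx, g₀, hg₀, h1⟩
    simp only [dConv, hx1, hmem, false_or]
  have dval1 : dConv c H 1 = 0 := by simp [dConv]
  -- sign of inverse
  have sinv : ∀ g ∈ H, g ≠ 1 → c 1 g⁻¹ g₀ = - c 1 g g₀ := by
    intro g hg hg1
    have e1 : c 1 g⁻¹ g₀ = c g 1 (g * g₀) := by
      have := hinv g 1 g⁻¹ g₀
      simpa using this.symm
    have hgg₀ : g * g₀ ∉ H := fun e => hg₀ (by simpa using H.mul_mem (H.inv_mem hg) e)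
    have e2 : c g (g * g₀) 1 = c g g₀ 1 := const g hg 1 H.one_mem hg1 (g * g₀) hgg₀ g₀ hg₀
    have e3 := swap23 g 1 (g * g₀)
    have e4 := cyc 1 g g₀
    have e5 := swap23 g 1 g₀
    -- c g (g*g₀) 1 = -c g 1 (g*g₀); c g g₀ 1 = -c g 1 g₀? careful
    -- swap23 g 1 (g*g₀) : c g (g*g₀) 1 = - c g 1 (g*g₀)
    -- cyc 1 g g₀ : c g g₀ 1 = c 1 g g₀
    omega
  -- key cocycle formula
  have key : ∀ g ∈ H, ∀ h ∈ H, h ≠ 1 →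
      c 1 g (g * h) = c 1 g g₀ + c 1 h g₀ - c 1 (g * h) g₀ := by
    intro g hg h hh hh1
    have hcoc1 := hcoc 1 g (g * h) g₀
    have hgh : g ≠ g * h := fun e => hh1 (by simpa using e.symm)
    have hgg₀ : g * g₀ ∉ H := fun e => hg₀ (by simpa using H.mul_mem (H.inv_mem hg) e)
    have e2 : c g g₀ (g * h) = c g (g * g₀) (g * h) :=
      const g hg (g * h) (H.mul_mem hg hh) hgh g₀ hg₀ (g * g₀) hgg₀
    have e3 : c g (g * g₀) (g * h) = c 1 g₀ h := by
      have := hinv g 1 g₀ h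
      simpa using this
    have e4 := swap23 g g₀ (g * h)  -- c g (g*h) g₀ = - c g g₀ (g*h)
    have e5 := swap23 1 h g₀       -- c 1 g₀ h = - c 1 h g₀
    omega
  -- main proof
  intro g hg h hh
  by_cases hg1 : g = 1
  · subst hg1; simp [fc, dConv]
  by_cases hh1 : h = 1
  · subst hh1; simp [fc, dConv]
  have efc : fc c g h = if c 1 g (g * h) = 1 then 0 else 1 := by
    simp [fc, hg1, hh1]
  have eg := dval g hg hg1
  have eh := dval h hh hh1
  have sg : c 1 g g₀ = 1 ∨ c 1 g g₀ = -1 :=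
    cne 1 g g₀ (Ne.symm hg1) (fun e => hg₀ (e ▸ hg)) (Ne.symm hg₀1)
  have sh : c 1 h g₀ = 1 ∨ c 1 h g₀ = -1 :=
    cne 1 h g₀ (Ne.symm hh1) (fun e => hg₀ (e ▸ hh)) (Ne.symm hg₀1)
  by_cases hgh1 : g * h = 1
  · have hhinv : h = g⁻¹ := eq_inv_of_mul_eq_one_right hgh1
    have hinvs := sinv g hg hg1
    rw [← hhinv] at hinvs
    have e0 : c 1 g 1 = 0 := (hzero 1 g 1).2 (Or.inr (Or.inr rfl))
    rw [efc, hgh1, dval1, eg, eh]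
    split_ifs <;> omega
  · have hghH : g * h ∈ H := H.mul_mem hg hh
    have egh := dval (g * h) hghH hgh1
    have sgh : c 1 (g * h) g₀ = 1 ∨ c 1 (g * h) g₀ = -1 :=
      cne 1 (g * h) g₀ (Ne.symm hgh1) (fun e => hg₀ (e ▸ hghH)) (Ne.symm hg₀1)
    have hk := key g hg h hh hh1
    have cv : c 1 g (g * h) = 1 ∨ c 1 g (g * h) = -1 := by
      apply cne 1 g (g * h) (Ne.symm hg1)
      · intro e; exact hh1 (by simpa using e.symm)
      · exact Ne.symm hgh1
    rw [efc, eg, eh, egh]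
    split_ifs <;> omega
end
end

section
/- Let (G₁,c₁) and (G₂,c₂) be circularly-ordered groups and let c be the circular ordering on the free product G₁ * G₂ determined by the minimal-reduction construction. If φᵢ : (Gᵢ,cᵢ) → (Hᵢ,dᵢ) are injective order-preserving homomorphisms of circularly-ordered groups for i = 1,2, then the induced homomorphism φ₁ * φ₂ : G₁ * G₂ → H₁ * H₂ is order-preserving with respect to c and the analogous circular ordering d on H₁ * H₂. -/
open scoped Classical

noncomputable section

open Monoid

/-- The first (leftmost) letter of the reduced word representing an element of the
free product. -/
def firstLetter {ι : Type*} [DecidableEq ι] {M : ι → Type*} [∀ i, Group (M i)]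
    [∀ i, DecidableEq (M i)] (w : CoprodI M) : Option (Σ i, M i) :=
  (CoprodI.Word.equiv w).toList.head?

/-- `cf` is the circular ordering on the free product `G false * G true` determined by the
minimal-reduction construction from the circular orderings `c i` of the factors:
it is a circular ordering, invariant under cyclic permutations, takes the prescribed values
on triples of letters, and is computed by reducing each word to its leftmost letter. -/
def IsFreeProdOrdering {M : Bool → Type*} [∀ i, Group (M i)] [∀ i, DecidableEq (M i)]
    (c : ∀ i, M i → M i → M i → ℤ)
    (cf : CoprodI M → CoprodI M → CoprodI M → ℤ) : Prop :=
  IsCircularOrdering cf ∧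
  (∀ w₁ w₂ w₃ : CoprodI M, cf w₁ w₂ w₃ = cf w₂ w₃ w₁) ∧
  (∀ (g : M false) (h : M true), g ≠ 1 → h ≠ 1 →
    cf (CoprodI.of g) (CoprodI.of h) 1 = 1 ∧ cf (CoprodI.of h) (CoprodI.of g) 1 = -1) ∧
  (∀ (i : Bool) (g₁ g₂ g₃ : M i),
    cf (CoprodI.of g₁) (CoprodI.of g₂) (CoprodI.of g₃) = c i g₁ g₂ g₃) ∧
  (∀ (g₁ g₂ : M false) (h : M true), g₁ ≠ 1 → g₂ ≠ 1 → h ≠ 1 →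
    cf (CoprodI.of g₁) (CoprodI.of g₂) (CoprodI.of h) = c false g₁ g₂ 1) ∧
  (∀ (g : M false) (h₁ h₂ : M true), g ≠ 1 → h₁ ≠ 1 → h₂ ≠ 1 →
    cf (CoprodI.of g) (CoprodI.of h₁) (CoprodI.of h₂) = c true 1 h₁ h₂) ∧
  (∀ (w₁ w₂ w₃ : CoprodI M) (i : Bool) (x : M i),
    firstLetter w₁ = some ⟨i, x⟩ → firstLetter w₂ ≠ some ⟨i, x⟩ →
    firstLetter w₃ ≠ some ⟨i, x⟩ → cf w₁ w₂ w₃ = cf (CoprodI.of x) w₂ w₃)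


/-! A free-product ordering is determined by the orderings of the factors. For three words of which
two share their first letter `x`, left invariance lets us translate all three by `x⁻¹`, which
shortens the total length of the reduced words; when the three first letters are distinct, each
word may be replaced by its first letter; and on letters the values are prescribed by the factors.
Pulling back the ordering of `H₁ * H₂` along `φ₁ * φ₂` gives a free-product ordering built from
`dᵢ ∘ φᵢ = cᵢ`: since the `φᵢ` are injective, `φ₁ * φ₂` maps reduced words letterwise to reduced
words and so preserves first letters. By uniqueness, the pullback is `cf`. -/

open CoprodI

namespace Monoid.CoprodI.Word

variable {ι : Type*} {M : ι → Type*} [∀ i, Monoid (M i)]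

section Map

variable {N : ι → Type*} [∀ i, Monoid (N i)]

def map (φ : ∀ i, M i →* N i) (hφ : ∀ i, Function.Injective (φ i)) (w : Word M) : Word N where
  toList := w.toList.map fun l => ⟨l.1, φ l.1 l.2⟩
  ne_one := by
    simp only [List.mem_map, forall_exists_index, and_imp]
    rintro _ l hl rfl h
    exact w.ne_one l hl ((map_eq_one_iff _ (hφ l.1)).mp h)
  chain_ne := List.isChain_map _ |>.mpr w.chain_ne

theorem map_injective (φ : ∀ i, M i →* N i) (hφ : ∀ i, Function.Injective (φ i)) :
    Function.Injective (map φ hφ) := fun _ _ h =>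
  Word.ext <| List.map_injective_iff.mpr (Function.injective_id.sigma_map hφ) (congrArg toList h)

theorem prod_map (φ : ∀ i, M i →* N i) (hφ : ∀ i, Function.Injective (φ i)) (w : Word M) :
    prod (map φ hφ w) = lift (fun i => of.comp (φ i)) (prod w) := by
  simp only [prod, map, map_list_prod, List.map_map]
  rfl

end Map

variable [∀ i, DecidableEq (M i)]

theorem length_tail_le_length_rcons {i : ι} (p : Pair M i) :
    p.tail.toList.length ≤ (rcons p).toList.length := by
  rw [rcons]; split <;> simp [cons]

theorem length_rcons_le {i : ι} (p : Pair M i) :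
    (rcons p).toList.length ≤ p.tail.toList.length + 1 := by
  rw [rcons]; split <;> simp [cons]

variable [DecidableEq ι]

theorem length_of_smul_le {i : ι} (m : M i) (w : Word M) :
    (of m • w).toList.length ≤ w.toList.length + 1 :=
  calc (of m • w).toList.length ≤ (equivPair i w).tail.toList.length + 1 := length_rcons_le _
    _ ≤ w.toList.length + 1 := by
      gcongr
      simpa only [← equivPair_symm, Equiv.symm_apply_apply] using
        length_tail_le_length_rcons (equivPair i w)

theorem length_inv_smul_add_one {G : ι → Type*} [∀ i, Group (G i)] [∀ i, DecidableEq (G i)]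
    {i : ι} {x : G i} {w : Word G} (h : w.toList.head? = some ⟨i, x⟩) :
    ((of x)⁻¹ • w).toList.length + 1 = w.toList.length := by
  induction w using consRecOn with
  | empty => simp at h
  | cons j m u h1 h2 _ =>
    simp only [cons, List.head?_cons, Option.some.injEq] at h
    obtain ⟨rfl, h⟩ := Sigma.mk.inj_iff.mp h.symm
    obtain rfl := eq_of_heq h
    rw [cons_eq_smul, ← mul_smul, inv_mul_cancel, one_smul, ← cons_eq_smul (h1 := h1) (h2 := h2)]
    simp [cons]

theorem equiv_mul (a w : CoprodI M) : equiv (a * w) = a • equiv w :=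
  mul_smul a w (empty : Word M)

end Monoid.CoprodI.Word

section FreeProduct

variable {ι : Type*} [DecidableEq ι] {M : ι → Type*} [∀ i, Group (M i)] [∀ i, DecidableEq (M i)]

def reducedLength (w : CoprodI M) : ℕ := (Word.equiv w).toList.length

theorem reducedLength_of_mul_le {i : ι} (m : M i) (w : CoprodI M) :
    reducedLength (of m * w) ≤ reducedLength w + 1 := by
  rw [reducedLength, reducedLength, Word.equiv_mul]
  exact Word.length_of_smul_le m _

theorem reducedLength_inv_mul_add_one {i : ι} {x : M i} {w : CoprodI M}
    (h : firstLetter w = some ⟨i, x⟩) :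
    reducedLength ((of x)⁻¹ * w) + 1 = reducedLength w := by
  rw [reducedLength, reducedLength, Word.equiv_mul]
  exact Word.length_inv_smul_add_one h

theorem firstLetter_eq_none_iff {w : CoprodI M} : firstLetter w = none ↔ w = 1 := by
  rw [firstLetter, List.head?_eq_none_iff, ← Word.equiv.injective.eq_iff,
    show Word.equiv (1 : CoprodI M) = Word.empty from one_smul (CoprodI M) Word.empty, Word.ext_iff]
  rfl

theorem ne_one_of_firstLetter_eq_some {w : CoprodI M} {l : Σ i, M i}
    (h : firstLetter w = some l) : l.2 ≠ 1 :=
  (Word.equiv w).ne_one l (List.mem_of_mem_head? h)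

theorem firstLetter_of {i : ι} {x : M i} (hx : x ≠ 1) : firstLetter (of x) = some ⟨i, x⟩ := by
  rw [firstLetter, show Word.equiv (of x) = Word.cons x Word.empty (by simp [Word.fstIdx]) hx from
    Word.cons_eq_smul.symm]
  rfl

def ofLetter : Option (Σ i, M i) → CoprodI M := fun l => l.elim 1 fun l => of l.2

theorem firstLetter_ofLetter_firstLetter (w : CoprodI M) :
    firstLetter (ofLetter (firstLetter w)) = firstLetter w := by
  rcases h : firstLetter w with _ | ⟨i, x⟩
  · exact firstLetter_eq_none_iff.mpr rfl
  · exact firstLetter_of (ne_one_of_firstLetter_eq_some h)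

section Lift

variable {N : ι → Type*} [∀ i, Group (N i)] [∀ i, DecidableEq (N i)]
  (φ : ∀ i, M i →* N i)

theorem equiv_lift_of_comp (hφ : ∀ i, Function.Injective (φ i)) (w : CoprodI M) :
    Word.equiv (lift (fun i => of.comp (φ i)) w) = Word.map φ hφ (Word.equiv w) := by
  rw [← Word.equiv.apply_symm_apply (Word.map φ hφ _)]
  change _ = Word.equiv (Word.prod _)
  rw [Word.prod_map]
  exact congrArg _ (congrArg _ (Word.equiv.symm_apply_apply w).symm)

theorem lift_of_comp_injective (hφ : ∀ i, Function.Injective (φ i)) :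
    Function.Injective (lift fun i => of.comp (φ i)) := fun a b h =>
  Word.equiv.injective <| Word.map_injective φ hφ <| by
    rw [← equiv_lift_of_comp φ hφ, ← equiv_lift_of_comp φ hφ, h]

theorem firstLetter_lift_of_comp (hφ : ∀ i, Function.Injective (φ i)) (w : CoprodI M) :
    firstLetter (lift (fun i => of.comp (φ i)) w) =
      (firstLetter w).map (Sigma.map id fun i => φ i) := by
  rw [firstLetter, firstLetter, equiv_lift_of_comp φ hφ, Word.map, List.head?_map]
  rfl

theorem firstLetter_lift_of_comp_eq_some_iff (hφ : ∀ i, Function.Injective (φ i)) {w : CoprodI M}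
    {i : ι} {x : M i} :
    firstLetter (lift (fun i => of.comp (φ i)) w) = some ⟨i, φ i x⟩ ↔
      firstLetter w = some ⟨i, x⟩ := by
  rw [firstLetter_lift_of_comp φ hφ]
  exact (Option.map_injective (Function.injective_id.sigma_map hφ)).eq_iff' rfl

end Lift

end FreeProduct

section Uniqueness

variable {ι : Type*} [DecidableEq ι] {M : ι → Type*} [∀ i, Group (M i)] [∀ i, DecidableEq (M i)]

structure ReducesToLetters (f : CoprodI M → CoprodI M → CoprodI M → ℤ) : Prop where
  apply_self_left : ∀ a b, f a a b = 0
  cyclic : ∀ a b e, f a b e = f b e a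
  mul_left : ∀ g a b e, f (g * a) (g * b) (g * e) = f a b e
  reduce : ∀ a b e (i : ι) (x : M i), firstLetter a = some ⟨i, x⟩ →
    firstLetter b ≠ some ⟨i, x⟩ → firstLetter e ≠ some ⟨i, x⟩ → f a b e = f (of x) b e

namespace ReducesToLetters

variable {f g : CoprodI M → CoprodI M → CoprodI M → ℤ}

theorem eq_of_eq_rotate (hf : ReducesToLetters f) (hg : ReducesToLetters g) {a b e : CoprodI M}
    (h : f b e a = g b e a) : f a b e = g a b e := by
  rwa [hf.cyclic, hg.cyclic]

theorem apply_ofLetter_firstLetter (hf : ReducesToLetters f) {a b e : CoprodI M}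
    (hb : firstLetter b ≠ firstLetter a) (he : firstLetter e ≠ firstLetter a) :
    f a b e = f (ofLetter (firstLetter a)) b e := by
  rcases ha : firstLetter a with _ | ⟨i, x⟩
  · rw [firstLetter_eq_none_iff.mp ha]
    rfl
  · rw [ha] at hb he
    exact hf.reduce a b e i x ha hb he

theorem apply_eq_apply_ofLetter_firstLetter (hf : ReducesToLetters f) {a b e : CoprodI M}
    (hab : firstLetter a ≠ firstLetter b) (hbe : firstLetter b ≠ firstLetter e)
    (hae : firstLetter a ≠ firstLetter e) :
    f a b e =
      f (ofLetter (firstLetter a)) (ofLetter (firstLetter b)) (ofLetter (firstLetter e)) := by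
  set ℓ : CoprodI M → CoprodI M := fun w => ofLetter (firstLetter w)
  have hℓ (w : CoprodI M) : firstLetter (ℓ w) = firstLetter w := firstLetter_ofLetter_firstLetter w
  calc f a b e = f (ℓ a) b e := hf.apply_ofLetter_firstLetter hab.symm hae.symm
    _ = f b e (ℓ a) := hf.cyclic _ _ _
    _ = f (ℓ b) e (ℓ a) := hf.apply_ofLetter_firstLetter hbe.symm (by rwa [hℓ])
    _ = f e (ℓ a) (ℓ b) := hf.cyclic _ _ _
    _ = f (ℓ e) (ℓ a) (ℓ b) := hf.apply_ofLetter_firstLetter (by rwa [hℓ]) (by rwa [hℓ])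
    _ = f (ℓ a) (ℓ b) (ℓ e) := hf.cyclic _ _ _

theorem eq_of_apply_ofLetter_eq (hf : ReducesToLetters f) (hg : ReducesToLetters g)
    (h : ∀ a b e : Option (Σ i, M i),
      f (ofLetter a) (ofLetter b) (ofLetter e) = g (ofLetter a) (ofLetter b) (ofLetter e))
    (w₁ w₂ w₃ : CoprodI M) : f w₁ w₂ w₃ = g w₁ w₂ w₃ := by
  induction hn : reducedLength w₁ + reducedLength w₂ + reducedLength w₃
    using Nat.strong_induction_on generalizing w₁ w₂ w₃ with
  | _ n ih =>
  have of_firstLetter_eq (a b e : CoprodI M) (hab : firstLetter a = firstLetter b)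
      (hn : reducedLength a + reducedLength b + reducedLength e = n) : f a b e = g a b e := by
    rcases ha : firstLetter a with _ | ⟨i, x⟩
    · obtain rfl := firstLetter_eq_none_iff.mp ha
      obtain rfl := firstLetter_eq_none_iff.mp (hab ▸ ha)
      rw [hf.apply_self_left, hg.apply_self_left]
    · rw [← hf.mul_left (of x)⁻¹, ← hg.mul_left (of x)⁻¹]
      have hla := reducedLength_inv_mul_add_one ha
      have hlb := reducedLength_inv_mul_add_one (hab ▸ ha)
      have hle := reducedLength_of_mul_le x⁻¹ e
      rw [map_inv] at hle
      exact ih _ (by omega) _ _ _ rfl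
  by_cases h12 : firstLetter w₁ = firstLetter w₂
  · exact of_firstLetter_eq _ _ _ h12 hn
  by_cases h23 : firstLetter w₂ = firstLetter w₃
  · exact eq_of_eq_rotate hf hg (of_firstLetter_eq _ _ _ h23 (by omega))
  by_cases h13 : firstLetter w₁ = firstLetter w₃
  · exact eq_of_eq_rotate hf hg <| eq_of_eq_rotate hf hg <|
      of_firstLetter_eq _ _ _ h13.symm (by omega)
  rw [hf.apply_eq_apply_ofLetter_firstLetter h12 h23 h13,
    hg.apply_eq_apply_ofLetter_firstLetter h12 h23 h13]
  exact h _ _ _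

end ReducesToLetters

end Uniqueness

theorem IsCircularOrdering.comp_injective {G H : Type*} [Group G] [Group H]
    {c : H → H → H → ℤ} (hc : IsCircularOrdering c) (ψ : G →* H) (hψ : Function.Injective ψ) :
    IsCircularOrdering fun a b e => c (ψ a) (ψ b) (ψ e) := by
  obtain ⟨hzero, hvalues, hcocycle, hmul⟩ := hc
  refine ⟨fun a b e => ?_, fun a b e => hvalues _ _ _, fun a₁ a₂ a₃ a₄ => hcocycle _ _ _ _,
    fun g a b e => ?_⟩
  · simp only [hzero, hψ.eq_iff]
  · simp only [map_mul, hmul]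

namespace IsFreeProdOrdering

variable {M : Bool → Type*} [∀ i, Group (M i)] [∀ i, DecidableEq (M i)]
  {c : ∀ i, M i → M i → M i → ℤ} {f g : CoprodI M → CoprodI M → CoprodI M → ℤ}

theorem reducesToLetters (hf : IsFreeProdOrdering c f) : ReducesToLetters f := by
  obtain ⟨⟨hzero, -, -, hmul⟩, hcyclic, -, -, -, -, hreduce⟩ := hf
  exact ⟨fun a b => (hzero a a b).mpr (Or.inl rfl), hcyclic, hmul, hreduce⟩

theorem apply_of_of_one_eq (hf : IsFreeProdOrdering c f) (hg : IsFreeProdOrdering c g)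
    {i j : Bool} (x : M i) (y : M j) : f (of x) (of y) 1 = g (of x) (of y) 1 := by
  obtain ⟨-, -, hf_mixed, hf_same, -⟩ := hf
  obtain ⟨-, -, hg_mixed, hg_same, -⟩ := hg
  have same_factor (k : Bool) (x y : M k) : f (of x) (of y) 1 = g (of x) (of y) 1 := by
    simpa only [map_one] using (hf_same k x y 1).trans (hg_same k x y 1).symm
  by_cases hx : x = 1
  · simpa only [hx, map_one] using same_factor j 1 y
  by_cases hy : y = 1
  · simpa only [hy, map_one] using same_factor i x 1
  cases i <;> cases j
  · exact same_factor false x y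
  · rw [(hf_mixed x y hx hy).1, (hg_mixed x y hx hy).1]
  · rw [(hf_mixed y x hy hx).2, (hg_mixed y x hy hx).2]
  · exact same_factor true x y

theorem apply_of_of_of_eq (hf : IsFreeProdOrdering c f) (hg : IsFreeProdOrdering c g)
    {i j k : Bool} {x : M i} {y : M j} {z : M k} (hx : x ≠ 1) (hy : y ≠ 1) (hz : z ≠ 1) :
    f (of x) (of y) (of z) = g (of x) (of y) (of z) := by
  have rotate {a b e : CoprodI M} : f b e a = g b e a → f a b e = g a b e :=
    hf.reducesToLetters.eq_of_eq_rotate hg.reducesToLetters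
  obtain ⟨-, -, -, hf_same, hf_fft, hf_ftt, -⟩ := hf
  obtain ⟨-, -, -, hg_same, hg_fft, hg_ftt, -⟩ := hg
  have same_factor (k : Bool) (x y z : M k) : f (of x) (of y) (of z) = g (of x) (of y) (of z) := by
    rw [hf_same, hg_same]
  have fft {x y : M false} {z : M true} (hx : x ≠ 1) (hy : y ≠ 1) (hz : z ≠ 1) :
      f (of x) (of y) (of z) = g (of x) (of y) (of z) := by
    rw [hf_fft x y z hx hy hz, hg_fft x y z hx hy hz]
  have ftt {x : M false} {y z : M true} (hx : x ≠ 1) (hy : y ≠ 1) (hz : z ≠ 1) :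
      f (of x) (of y) (of z) = g (of x) (of y) (of z) := by
    rw [hf_ftt x y z hx hy hz, hg_ftt x y z hx hy hz]
  cases i <;> cases j <;> cases k
  · exact same_factor false x y z
  · exact fft hx hy hz
  · exact rotate (rotate (fft hz hx hy))
  · exact ftt hx hy hz
  · exact rotate (fft hy hz hx)
  · exact rotate (ftt hy hz hx)
  · exact rotate (rotate (ftt hz hx hy))
  · exact same_factor true x y z

theorem apply_ofLetter_eq (hf : IsFreeProdOrdering c f) (hg : IsFreeProdOrdering c g)
    (a b e : Option (Σ i, M i)) :
    f (ofLetter a) (ofLetter b) (ofLetter e) = g (ofLetter a) (ofLetter b) (ofLetter e) := by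
  have rotate {a b e : CoprodI M} : f b e a = g b e a → f a b e = g a b e :=
    hf.reducesToLetters.eq_of_eq_rotate hg.reducesToLetters
  have of_letter (a : Option (Σ i, M i)) : ∃ l : Σ i, M i, ofLetter a = of l.2 := by
    rcases a with _ | l
    · exact ⟨⟨false, 1⟩, (map_one _).symm⟩
    · exact ⟨l, rfl⟩
  obtain ⟨⟨i, x⟩, hxa⟩ := of_letter a
  obtain ⟨⟨j, y⟩, hyb⟩ := of_letter b
  obtain ⟨⟨k, z⟩, hze⟩ := of_letter e
  rw [hxa, hyb, hze]
  by_cases hz : z = 1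
  · rw [hz, map_one]
    exact apply_of_of_one_eq hf hg x y
  by_cases hx : x = 1
  · refine rotate ?_
    rw [hx, map_one]
    exact apply_of_of_one_eq hf hg y z
  by_cases hy : y = 1
  · refine rotate (rotate ?_)
    rw [hy, map_one]
    exact apply_of_of_one_eq hf hg z x
  exact apply_of_of_of_eq hf hg hx hy hz

theorem unique (hf : IsFreeProdOrdering c f) (hg : IsFreeProdOrdering c g) : f = g :=
  funext₃ <| hf.reducesToLetters.eq_of_apply_ofLetter_eq hg.reducesToLetters
    (apply_ofLetter_eq hf hg)

end IsFreeProdOrdering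

theorem IsFreeProdOrdering.comp_lift {M N : Bool → Type*} [∀ i, Group (M i)] [∀ i, Group (N i)]
    [∀ i, DecidableEq (M i)] [∀ i, DecidableEq (N i)]
    {c : ∀ i, M i → M i → M i → ℤ} {d : ∀ i, N i → N i → N i → ℤ}
    {df : CoprodI N → CoprodI N → CoprodI N → ℤ} (hdf : IsFreeProdOrdering d df)
    (φ : ∀ i, M i →* N i) (hφinj : ∀ i, Function.Injective (φ i))
    (hφord : ∀ (i : Bool) (g₁ g₂ g₃ : M i), c i g₁ g₂ g₃ = d i (φ i g₁) (φ i g₂) (φ i g₃)) :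
    IsFreeProdOrdering c fun a b e =>
      df (lift (fun i => of.comp (φ i)) a) (lift (fun i => of.comp (φ i)) b)
        (lift (fun i => of.comp (φ i)) e) := by
  obtain ⟨hcirc, hcyclic, hmixed, hsame, hfft, hftt, hreduce⟩ := hdf
  have hne {i : Bool} {x : M i} (hx : x ≠ 1) : φ i x ≠ 1 := (map_ne_one_iff _ (hφinj i)).mpr hx
  refine ⟨hcirc.comp_injective _ (lift_of_comp_injective φ hφinj), fun a b e => hcyclic _ _ _,
    ?_, ?_, ?_, ?_, ?_⟩ <;> simp only [lift_of, MonoidHom.comp_apply, map_one]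
  · exact fun g h hg hh => hmixed _ _ (hne hg) (hne hh)
  · intro i g₁ g₂ g₃
    rw [hsame, hφord]
  · intro g₁ g₂ h hg₁ hg₂ hh
    rw [hfft _ _ _ (hne hg₁) (hne hg₂) (hne hh), hφord, map_one]
  · intro g h₁ h₂ hg hh₁ hh₂
    rw [hftt _ _ _ (hne hg) (hne hh₁) (hne hh₂), hφord, map_one]
  · intro a b e i x ha hb he
    exact hreduce _ _ _ i (φ i x) ((firstLetter_lift_of_comp_eq_some_iff φ hφinj).mpr ha)
      (mt (firstLetter_lift_of_comp_eq_some_iff φ hφinj).mp hb)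
      (mt (firstLetter_lift_of_comp_eq_some_iff φ hφinj).mp he)

theorem stmt18_general {M N : Bool → Type*} [∀ i, Group (M i)] [∀ i, Group (N i)]
    [∀ i, DecidableEq (M i)] [∀ i, DecidableEq (N i)]
    (c : ∀ i, M i → M i → M i → ℤ) (d : ∀ i, N i → N i → N i → ℤ)
    (cf : CoprodI M → CoprodI M → CoprodI M → ℤ)
    (df : CoprodI N → CoprodI N → CoprodI N → ℤ)
    (hcf : IsFreeProdOrdering c cf) (hdf : IsFreeProdOrdering d df)
    (φ : ∀ i, M i →* N i) (hφinj : ∀ i, Function.Injective (φ i))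
    (hφord : ∀ (i : Bool) (g₁ g₂ g₃ : M i),
      c i g₁ g₂ g₃ = d i (φ i g₁) (φ i g₂) (φ i g₃)) :
    ∀ w₁ w₂ w₃ : CoprodI M,
      cf w₁ w₂ w₃ =
        df (CoprodI.lift (fun i => CoprodI.of.comp (φ i)) w₁)
          (CoprodI.lift (fun i => CoprodI.of.comp (φ i)) w₂)
          (CoprodI.lift (fun i => CoprodI.of.comp (φ i)) w₃) := by
  rw [hcf.unique (hdf.comp_lift φ hφinj hφord)]
  exact fun _ _ _ => rfl

/-- If `φᵢ : (Gᵢ,cᵢ) → (Hᵢ,dᵢ)` are injective order-preserving homomorphisms, then the induced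
homomorphism `φ₁ * φ₂` of free products is order-preserving for the circular orderings given
by the minimal-reduction construction. -/
theorem stmt18 {M N : Bool → Type*} [∀ i, Group (M i)] [∀ i, Group (N i)]
    [∀ i, DecidableEq (M i)] [∀ i, DecidableEq (N i)]
    (c : ∀ i, M i → M i → M i → ℤ) (d : ∀ i, N i → N i → N i → ℤ)
    (hc : ∀ i, IsCircularOrdering (c i)) (hd : ∀ i, IsCircularOrdering (d i))
    (cf : CoprodI M → CoprodI M → CoprodI M → ℤ)
    (df : CoprodI N → CoprodI N → CoprodI N → ℤ)
    (hcf : IsFreeProdOrdering c cf) (hdf : IsFreeProdOrdering d df)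
    (φ : ∀ i, M i →* N i) (hφinj : ∀ i, Function.Injective (φ i))
    (hφord : ∀ (i : Bool) (g₁ g₂ g₃ : M i),
      c i g₁ g₂ g₃ = d i (φ i g₁) (φ i g₂) (φ i g₃)) :
    ∀ w₁ w₂ w₃ : CoprodI M,
      cf w₁ w₂ w₃ =
        df (CoprodI.lift (fun i => CoprodI.of.comp (φ i)) w₁)
          (CoprodI.lift (fun i => CoprodI.of.comp (φ i)) w₂)
          (CoprodI.lift (fun i => CoprodI.of.comp (φ i)) w₃) :=
  stmt18_general c d cf df hcf hdf φ hφinj hφord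
end
end

section
/- Let (G,c) be a circularly-ordered group, (G̃, <_c, z_c) its lift, and c_α another circular ordering on G with [f_{c_α}] = [f_c] in H²(G;ℤ), witnessed by d_α : G → ℤ with f_c(a,b) − f_{c_α}(a,b) = d_α(a) + d_α(b) − d_α(ab). For any homomorphism φ : G → ℤ, the set P_{α,φ} = {(n,a) ∈ G̃ : n + d_α(a) + φ(a) ≥ 0} \ {(0,id)} is the positive cone of a left ordering of G̃; indeed, the map Φ : G̃ → G̃_{c_α} given by Φ(n,a) = (n + d_α(a) + φ(a), a) is a group isomorphism pulling back the standard positive cone of the lift of (G, c_α) to P_{α,φ}. -/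
open scoped Classical

noncomputable section

/-- Given a cohomologous circular ordering `c_α` (witnessed by `d_α`) and a homomorphism
`φ : G → ℤ`, the set `P_{α,φ}` is the positive cone of a left ordering of `G̃`, pulled back
from the standard cone of the lift of `(G,c_α)` by the isomorphism
`Φ(n,a) = (n + d_α(a) + φ(a), a)`. -/
theorem stmt19 {G : Type*} [Group G] (c cα : G → G → G → ℤ)
    (hc : IsCircularOrdering c) (hcα : IsCircularOrdering cα)
    (dα : G → ℤ)
    (hd : ∀ a b : G, fc c a b - fc cα a b = dα a + dα b - dα (a * b))
    (φ : G → ℤ) (hφ : ∀ a b : G, φ (a * b) = φ a + φ b) :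
    (∀ p q : ℤ × G,
      ((mulT c p q).1 + dα (mulT c p q).2 + φ (mulT c p q).2, (mulT c p q).2) =
        mulT cα (p.1 + dα p.2 + φ p.2, p.2) (q.1 + dα q.2 + φ q.2, q.2)) ∧
    Function.Bijective (fun p : ℤ × G => ((p.1 + dα p.2 + φ p.2 : ℤ), p.2)) ∧
    (∀ p : ℤ × G,
      ((p.1 + dα p.2 + φ p.2 : ℤ), p.2) ∈ posT G ↔
        (0 ≤ p.1 + dα p.2 + φ p.2 ∧ p ≠ ((0 : ℤ), (1 : G)))) ∧
    (∀ p : ℤ × G, (0 ≤ p.1 + dα p.2 + φ p.2 ∧ p ≠ ((0 : ℤ), (1 : G))) →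
      ∀ q : ℤ × G, (0 ≤ q.1 + dα q.2 + φ q.2 ∧ q ≠ ((0 : ℤ), (1 : G))) →
        (0 ≤ (mulT c p q).1 + dα (mulT c p q).2 + φ (mulT c p q).2 ∧
          mulT c p q ≠ ((0 : ℤ), (1 : G)))) ∧
    (∀ p : ℤ × G, p ≠ ((0 : ℤ), (1 : G)) →
      ((0 ≤ p.1 + dα p.2 + φ p.2 ∧ p ≠ ((0 : ℤ), (1 : G))) ↔
        ¬(0 ≤ (invT c p).1 + dα (invT c p).2 + φ (invT c p).2 ∧
            invT c p ≠ ((0 : ℤ), (1 : G))))) := by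
  have hφ1 : φ 1 = 0 := by have := hφ 1 1; simp at this; omega
  have hd1 : dα 1 = 0 := by have := hd 1 1; simp [fc] at this; omega
  have hφinv : ∀ a : G, φ a⁻¹ = -φ a := by
    intro a
    have := hφ a a⁻¹
    rw [mul_inv_cancel, hφ1] at this
    omega
  have hdinv : ∀ a : G, fc c a a⁻¹ - fc cα a a⁻¹ = dα a + dα a⁻¹ := by
    intro a
    have := hd a a⁻¹
    rw [mul_inv_cancel, hd1] at this
    omega
  have hfc01 : ∀ a b : G, fc cα a b = 0 ∨ fc cα a b = 1 := by
    intro a b; unfold fc; split <;> simp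
  have hfcα_inv : ∀ a : G, a ≠ 1 → fc cα a a⁻¹ = 1 := by
    intro a ha
    have hz : cα 1 a 1 = 0 := (hcα.1 1 a 1).2 (Or.inr (Or.inr rfl))
    simp [fc, ha, mul_inv_cancel, hz]
  have key : ∀ p q : ℤ × G,
      (mulT c p q).1 + dα (mulT c p q).2 + φ (mulT c p q).2 =
        (p.1 + dα p.2 + φ p.2) + (q.1 + dα q.2 + φ q.2) + fc cα p.2 q.2 := by
    intro p q
    simp only [mulT]
    have h1 := hd p.2 q.2
    have h2 := hφ p.2 q.2
    linarith
  have hne : ∀ p : ℤ × G,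
      (((p.1 + dα p.2 + φ p.2 : ℤ), p.2) = ((0:ℤ),(1:G))) ↔ p = ((0:ℤ),(1:G)) := by
    rintro ⟨n, g⟩
    simp only [Prod.mk.injEq]
    constructor
    · rintro ⟨h1, h2⟩
      subst h2
      rw [hd1, hφ1] at h1
      exact ⟨by omega, by trivial⟩
    · rintro ⟨h1, h2⟩
      subst h1; subst h2
      rw [hd1, hφ1]
      exact ⟨by ring, by trivial⟩
  refine ⟨?_, ⟨?_, ?_⟩, ?_, ?_, ?_⟩
  · intro p q
    have := key p q
    simp only [mulT, Prod.mk.injEq] at this ⊢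
    exact ⟨by linarith, trivial⟩
  · -- injective
    intro p q h
    simp only [Prod.mk.injEq] at h
    obtain ⟨h1, h2⟩ := h
    rw [h2] at h1
    have : p.1 = q.1 := by linarith
    exact Prod.ext this h2
  · -- surjective
    intro q
    exact ⟨(q.1 - dα q.2 - φ q.2, q.2), Prod.ext (by ring) rfl⟩
  · -- posT membership
    intro p
    simp only [posT, Set.mem_setOf_eq, ne_eq, hne p]
  · -- closure under multiplication
    rintro p ⟨hp1, hp2⟩ q ⟨hq1, hq2⟩
    have hk := key p q
    have hf := hfc01 p.2 q.2
    constructor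
    · rcases hf with h | h <;> linarith
    · intro hcon
      have hsnd : p.2 * q.2 = 1 := congrArg Prod.snd hcon
      have hfst : (mulT c p q).1 = 0 := congrArg Prod.fst hcon
      rw [hfst] at hk
      have hsnd' : (mulT c p q).2 = 1 := hsnd
      rw [hsnd'] at hk
      rw [hd1, hφ1] at hk
      have hp0 : p.1 + dα p.2 + φ p.2 = 0 := by rcases hf with h | h <;> linarith
      have hq0 : q.1 + dα q.2 + φ q.2 = 0 := by rcases hf with h | h <;> linarith
      have hfc0 : fc cα p.2 q.2 = 0 := by linarith
      have hpne : p.2 ≠ 1 := by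
        intro h
        apply hp2
        rw [h, hd1, hφ1] at hp0
        exact Prod.ext (by omega) h
      have hq : q.2 = p.2⁻¹ := eq_inv_of_mul_eq_one_right hsnd
      rw [hq, hfcα_inv p.2 hpne] at hfc0
      omega
  · -- inverse condition
    intro p hp
    have keyinv : (invT c p).1 + dα (invT c p).2 + φ (invT c p).2 =
        -(p.1 + dα p.2 + φ p.2) - fc cα p.2 p.2⁻¹ := by
      simp only [invT]
      have h1 := hdinv p.2
      have h2 := hφinv p.2
      linarith
    by_cases h : p.2 = 1
    · have hne0 : p.1 ≠ 0 := by
        intro h0; exact hp (Prod.ext h0 h)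
      have hfc11 : fc cα p.2 p.2⁻¹ = 0 := by
        rw [h]; simp [fc]
      rw [keyinv, hfc11]
      have hinvne : invT c p ≠ ((0:ℤ),(1:G)) := by
        intro hcon
        have hfst : (invT c p).1 = 0 := congrArg Prod.fst hcon
        simp only [invT, h] at hfst
        have : fc c (1:G) (1:G)⁻¹ = 0 := by simp [fc]
        rw [this] at hfst
        omega
      simp only [hp, hinvne, ne_eq, not_false_eq_true, and_true]
      rw [h, hd1, hφ1]
      omega
    · have hfc1 : fc cα p.2 p.2⁻¹ = 1 := hfcα_inv p.2 h
      rw [keyinv, hfc1]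
      have hinvne : invT c p ≠ ((0:ℤ),(1:G)) := by
        intro hcon
        have : (invT c p).2 = 1 := congrArg Prod.snd hcon
        simp only [invT] at this
        exact h (inv_eq_one.mp this)
      simp only [hp, hinvne, ne_eq, not_false_eq_true, and_true]
      omega
end
end
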